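/- arXiv:2305.05721 — 3 statements merged into one kernel-verified Lean document; each statement's English description precedes it below -/
import Mathlib

section
/- The function M̃ is twice differentiable on (0,∞) and satisfies the ordinary differential equation λ(1+x) M̃′(x) + (ν/2) x² M̃″(x) − λ M̃(x) = x for every x ∈ (0,∞). -/
open MeasureTheory Set
open scoped ENNReal NNReal BigOperators

noncomputable section

/-- The function `M̃` appearing in the Mayer reformulation (with diffusion
coefficient `ν`), where `κ := 2 λ / ν`. -/
def Mtilde (ν lam : ℝ) (x : ℝ) : ℝ :=
  (2 / ν) * (1 + x) *
    ∫ v in Set.Ioc (0 : ℝ) (x / (1 + x)),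
      ((1 - v) / v) ^ (2 * lam / ν) * Real.exp ((2 * lam / ν) / v) *
        ∫ u in Set.Ioc (0 : ℝ) v,
          u ^ (2 * lam / ν - 1) * (1 - u) ^ (-(2 * lam / ν) - 2) *
            Real.exp (-(2 * lam / ν) / u)

namespace MtildeAux

/-- inner integrand -/
def g (k u : ℝ) : ℝ := u ^ (k - 1) * (1 - u) ^ (-k - 2) * Real.exp (-k / u)

/-- inner integral -/
def G (k t : ℝ) : ℝ := ∫ u in Set.Ioc (0 : ℝ) t, g k u

def psi (k v : ℝ) : ℝ := ((1 - v) / v) ^ k * Real.exp (k / v)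

def phi (k v : ℝ) : ℝ := psi k v * G k v

def F (k t : ℝ) : ℝ := ∫ v in Set.Ioc (0 : ℝ) t, phi k v

variable {k : ℝ}

lemma g_contAt (hk : 0 < k) {u : ℝ} (hu : u ∈ Ioo (0:ℝ) 1) : ContinuousAt (g k) u := by
  obtain ⟨hu0, hu1⟩ := hu
  have h1 : ContinuousAt (fun u : ℝ => u ^ (k - 1)) u :=
    Real.continuousAt_rpow_const u (k - 1) (Or.inl hu0.ne')
  have h2 : ContinuousAt (fun u : ℝ => (1 - u) ^ (-k - 2)) u :=
    (continuousAt_const.sub continuousAt_id).rpow_const (Or.inl (by show (1:ℝ) - u ≠ 0; intro h; linarith))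
  have h3 : ContinuousAt (fun u : ℝ => Real.exp (-k / u)) u :=
    Real.continuous_exp.continuousAt.comp (continuousAt_const.div continuousAt_id hu0.ne')
  exact (h1.mul h2).mul h3

lemma g_nonneg (hk : 0 < k) {u : ℝ} (hu : u ∈ Ioo (0:ℝ) 1) : 0 ≤ g k u := by
  obtain ⟨hu0, hu1⟩ := hu
  have := Real.rpow_nonneg hu0.le (k - 1)
  have := Real.rpow_nonneg (by linarith : (0:ℝ) ≤ 1 - u) (-k - 2)
  have := (Real.exp_pos (-k / u)).le
  unfold g; positivity

lemma exp_neg_le (hk : 0 < k) {u : ℝ} (hu : 0 < u) : Real.exp (-k / u) ≤ u / k := by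
  have h1 : k / u ≤ Real.exp (k / u) := by
    have := Real.add_one_le_exp (k / u); linarith
  have h2 : 0 < k / u := div_pos hk hu
  have : Real.exp (-k / u) = (Real.exp (k / u))⁻¹ := by
    rw [← Real.exp_neg]; ring_nf
  rw [this]
  rw [show u / k = (k / u)⁻¹ by rw [inv_div]]
  exact inv_anti₀ h2 h1

lemma g_le (hk : 0 < k) {t : ℝ} (ht : t ∈ Ioo (0:ℝ) 1) {u : ℝ} (hu : u ∈ Ioc (0:ℝ) t) :
    g k u ≤ t ^ k / k * (1 - t) ^ (-k - 2) := by
  obtain ⟨hu0, hut⟩ := hu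
  have hu1 : u < 1 := lt_of_le_of_lt hut ht.2
  have h1t : 0 < 1 - t := by linarith [ht.2]
  have h1u : 0 < 1 - u := by linarith
  have e1 : u ^ (k - 1) * Real.exp (-k / u) ≤ u ^ k / k := by
    calc u ^ (k - 1) * Real.exp (-k / u) ≤ u ^ (k - 1) * (u / k) :=
          mul_le_mul_of_nonneg_left (exp_neg_le hk hu0) (Real.rpow_nonneg hu0.le _)
      _ = u ^ k / k := by
          rw [Real.rpow_sub hu0, Real.rpow_one]; field_simp
  have e2 : u ^ k ≤ t ^ k := Real.rpow_le_rpow hu0.le hut hk.le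
  have e3 : (1 - u) ^ (-k - 2) ≤ (1 - t) ^ (-k - 2) :=
    Real.rpow_le_rpow_of_nonpos h1t (by linarith) (by linarith)
  calc g k u = (u ^ (k - 1) * Real.exp (-k / u)) * (1 - u) ^ (-k - 2) := by unfold g; ring
    _ ≤ (u ^ k / k) * (1 - t) ^ (-k - 2) := by
        apply mul_le_mul e1 e3 (Real.rpow_nonneg h1u.le _)
        positivity
    _ ≤ (t ^ k / k) * (1 - t) ^ (-k - 2) := by
        apply mul_le_mul_of_nonneg_right _ (Real.rpow_nonneg h1t.le _)
        exact div_le_div_of_nonneg_right e2 hk.le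


lemma g_measurable : Measurable (g k) := by
  unfold g
  fun_prop

lemma g_integrableOn (hk : 0 < k) {t : ℝ} (ht : t ∈ Ioo (0:ℝ) 1) :
    IntegrableOn (g k) (Ioc (0:ℝ) t) := by
  apply Measure.integrableOn_of_bounded (M := t ^ k / k * (1 - t) ^ (-k - 2))
  · exact ((measure_Ioc_lt_top (a := (0:ℝ)) (b := t)).ne)
  · exact g_measurable.aestronglyMeasurable
  · refine (ae_restrict_iff' measurableSet_Ioc).2 (ae_of_all _ fun u hu => ?_)
    rw [Real.norm_eq_abs, abs_of_nonneg (g_nonneg hk ⟨hu.1, lt_of_le_of_lt hu.2 ht.2⟩)]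
    exact g_le hk ht hu

lemma g_intervalIntegrable (hk : 0 < k) {t : ℝ} (ht : t ∈ Ioo (0:ℝ) 1) :
    IntervalIntegrable (g k) volume 0 t :=
  (intervalIntegrable_iff_integrableOn_Ioc_of_le ht.1.le).2 (g_integrableOn hk ht)

lemma G_hasDerivAt (hk : 0 < k) {v : ℝ} (hv : v ∈ Ioo (0:ℝ) 1) :
    HasDerivAt (G k) (g k v) v := by
  have hcont : ContinuousOn (g k) (Ioo (0:ℝ) 1) := fun u hu =>
    (g_contAt hk hu).continuousWithinAt
  have h := intervalIntegral.integral_hasDerivAt_right (g_intervalIntegrable hk hv)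
    (hcont.stronglyMeasurableAtFilter isOpen_Ioo v hv) (g_contAt hk hv)
  apply h.congr_of_eventuallyEq
  filter_upwards [eventually_gt_nhds hv.1] with t ht
  unfold G
  rw [intervalIntegral.integral_of_le ht.le]

lemma G_nonneg (hk : 0 < k) {v : ℝ} (hv : v ∈ Ioo (0:ℝ) 1) : 0 ≤ G k v := by
  apply setIntegral_nonneg measurableSet_Ioc
  exact fun u hu => g_nonneg hk ⟨hu.1, lt_of_le_of_lt hu.2 hv.2⟩

lemma G_le (hk : 0 < k) {v : ℝ} (hv : v ∈ Ioo (0:ℝ) 1) :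
    G k v ≤ (1 - v) ^ (-k - 2) * Real.exp (-k / v) * (v ^ k / k) := by
  obtain ⟨hv0, hv1⟩ := hv
  have h1v : 0 < 1 - v := by linarith
  set C : ℝ := (1 - v) ^ (-k - 2) * Real.exp (-k / v) with hC
  have hC0 : 0 ≤ C := by positivity
  have hInt2 : IntegrableOn (fun u : ℝ => u ^ (k - 1) * C) (Ioc (0:ℝ) v) := by
    have := (intervalIntegral.intervalIntegrable_rpow' (a := 0) (b := v)
      (r := k - 1) (by linarith)).mul_const C
    exact (intervalIntegrable_iff_integrableOn_Ioc_of_le hv0.le).1 this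
  have hmono : ∀ u ∈ Ioc (0:ℝ) v, g k u ≤ u ^ (k - 1) * C := by
    intro u hu
    obtain ⟨hu0, huv⟩ := hu
    have hu1 : u < 1 := lt_of_le_of_lt huv hv1
    have e3 : (1 - u) ^ (-k - 2) ≤ (1 - v) ^ (-k - 2) :=
      Real.rpow_le_rpow_of_nonpos h1v (by linarith) (by linarith)
    have e4 : Real.exp (-k / u) ≤ Real.exp (-k / v) := by
      apply Real.exp_le_exp.2
      rw [neg_div, neg_div, neg_le_neg_iff]
      exact div_le_div_of_nonneg_left hk.le hu0 huv
    calc g k u = u ^ (k - 1) * ((1 - u) ^ (-k - 2) * Real.exp (-k / u)) := by unfold g; ring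
      _ ≤ u ^ (k - 1) * C := by
          apply mul_le_mul_of_nonneg_left _ (Real.rpow_nonneg hu0.le _)
          rw [hC]
          exact mul_le_mul e3 e4 (Real.exp_pos _).le (Real.rpow_nonneg h1v.le _)
  have hval : ∫ u in Ioc (0:ℝ) v, u ^ (k - 1) * C = C * (v ^ k / k) := by
    rw [← intervalIntegral.integral_of_le hv0.le, intervalIntegral.integral_mul_const,
      integral_rpow (Or.inl (by linarith))]
    rw [sub_add_cancel, Real.zero_rpow hk.ne']
    ring
  calc G k v ≤ ∫ u in Ioc (0:ℝ) v, u ^ (k - 1) * C := by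
        apply setIntegral_mono_on (g_integrableOn hk ⟨hv0, hv1⟩) hInt2 measurableSet_Ioc hmono
    _ = C * (v ^ k / k) := hval
    _ = (1 - v) ^ (-k - 2) * Real.exp (-k / v) * (v ^ k / k) := rfl


lemma psi_contAt {v : ℝ} (hv : v ∈ Ioo (0:ℝ) 1) : ContinuousAt (psi k) v := by
  obtain ⟨hv0, hv1⟩ := hv
  have h1 : ContinuousAt (fun v : ℝ => ((1 - v) / v) ^ k) v := by
    apply ContinuousAt.rpow_const
    · exact (continuousAt_const.sub continuousAt_id).div continuousAt_id hv0.ne'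
    · left
      have h : 0 < (1 - v) / v := div_pos (by linarith) hv0
      exact h.ne'
  have h2 : ContinuousAt (fun v : ℝ => Real.exp (k / v)) v :=
    Real.continuous_exp.continuousAt.comp (continuousAt_const.div continuousAt_id hv0.ne')
  exact h1.mul h2

lemma psi_nonneg {v : ℝ} (hv : v ∈ Ioo (0:ℝ) 1) : 0 ≤ psi k v := by
  have : 0 < (1 - v) / v := div_pos (by linarith [hv.2]) hv.1
  unfold psi
  positivity

lemma phi_nonneg (hk : 0 < k) {v : ℝ} (hv : v ∈ Ioo (0:ℝ) 1) : 0 ≤ phi k v :=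
  mul_nonneg (psi_nonneg hv) (G_nonneg hk hv)

lemma phi_le (hk : 0 < k) {v : ℝ} (hv : v ∈ Ioo (0:ℝ) 1) :
    phi k v ≤ (1 - v) ^ (-2 : ℝ) / k := by
  obtain ⟨hv0, hv1⟩ := hv
  have h1v : 0 < 1 - v := by linarith
  have key : psi k v * ((1 - v) ^ (-k - 2) * Real.exp (-k / v) * (v ^ k / k))
      = (1 - v) ^ (-2 : ℝ) / k := by
    unfold psi
    have e1 : (1 - v) ^ (-2 : ℝ) = (1 - v) ^ k * (1 - v) ^ (-k - 2) := by
      rw [← Real.rpow_add h1v]; congr 1; ring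
    have e2 : Real.exp (k / v) * Real.exp (-k / v) = 1 := by
      rw [← Real.exp_add]; simp [neg_div]
    have hvk : (0:ℝ) < v ^ k := Real.rpow_pos_of_pos hv0 k
    rw [Real.div_rpow h1v.le hv0.le, e1]
    rw [show (1 - v) ^ k * (1 - v) ^ (-k - 2) / k
        = ((1 - v) ^ k * (1 - v) ^ (-k - 2)) * (Real.exp (k / v) * Real.exp (-k / v)) / k by
      rw [e2]; ring]
    field_simp
  calc phi k v ≤ psi k v * ((1 - v) ^ (-k - 2) * Real.exp (-k / v) * (v ^ k / k)) :=
        mul_le_mul_of_nonneg_left (G_le hk ⟨hv0, hv1⟩) (psi_nonneg ⟨hv0, hv1⟩)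
    _ = (1 - v) ^ (-2 : ℝ) / k := key

lemma phi_contAt (hk : 0 < k) {v : ℝ} (hv : v ∈ Ioo (0:ℝ) 1) : ContinuousAt (phi k) v :=
  (psi_contAt hv).mul (G_hasDerivAt hk hv).continuousAt

lemma phi_integrableOn (hk : 0 < k) {t : ℝ} (ht : t ∈ Ioo (0:ℝ) 1) :
    IntegrableOn (phi k) (Ioc (0:ℝ) t) := by
  have h1t : 0 < 1 - t := by linarith [ht.2]
  have hcont : ContinuousOn (phi k) (Ioc (0:ℝ) t) := fun u hu =>
    (phi_contAt hk ⟨hu.1, lt_of_le_of_lt hu.2 ht.2⟩).continuousWithinAt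
  constructor
  · exact hcont.aestronglyMeasurable measurableSet_Ioc
  apply HasFiniteIntegral.restrict_of_bounded (C := (1 - t) ^ (-2 : ℝ) / k)
    (measure_Ioc_lt_top (a := (0:ℝ)) (b := t))
  · refine (ae_restrict_iff' measurableSet_Ioc).2 (ae_of_all _ fun v hv => ?_)
    have hv' : v ∈ Ioo (0:ℝ) 1 := ⟨hv.1, lt_of_le_of_lt hv.2 ht.2⟩
    have h1v : 0 < 1 - v := by linarith [hv'.2]
    rw [Real.norm_eq_abs, abs_of_nonneg (phi_nonneg hk hv')]
    calc phi k v ≤ (1 - v) ^ (-2 : ℝ) / k := phi_le hk hv'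
      _ ≤ (1 - t) ^ (-2 : ℝ) / k := by
          exact div_le_div_of_nonneg_right
            (Real.rpow_le_rpow_of_nonpos h1t (by linarith [hv.2]) (by norm_num)) hk.le

lemma phi_intervalIntegrable (hk : 0 < k) {t : ℝ} (ht : t ∈ Ioo (0:ℝ) 1) :
    IntervalIntegrable (phi k) volume 0 t :=
  (intervalIntegrable_iff_integrableOn_Ioc_of_le ht.1.le).2 (phi_integrableOn hk ht)

lemma F_hasDerivAt (hk : 0 < k) {v : ℝ} (hv : v ∈ Ioo (0:ℝ) 1) :
    HasDerivAt (F k) (phi k v) v := by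
  have hcont : ContinuousOn (phi k) (Ioo (0:ℝ) 1) := fun u hu =>
    (phi_contAt hk hu).continuousWithinAt
  have h := intervalIntegral.integral_hasDerivAt_right (phi_intervalIntegrable hk hv)
    (hcont.stronglyMeasurableAtFilter isOpen_Ioo v hv) (phi_contAt hk hv)
  apply h.congr_of_eventuallyEq
  filter_upwards [eventually_gt_nhds hv.1] with t ht
  unfold F
  rw [intervalIntegral.integral_of_le ht.le]


lemma psi_hasDerivAt (hk : 0 < k) {v : ℝ} (hv : v ∈ Ioo (0:ℝ) 1) :
    HasDerivAt (psi k) (-k * psi k v / (v ^ 2 * (1 - v))) v := by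
  obtain ⟨hv0, hv1⟩ := hv
  have h1v : 0 < 1 - v := by linarith
  have hq : 0 < (1 - v) / v := div_pos h1v hv0
  have hder_q : HasDerivAt (fun v : ℝ => (1 - v) / v) (-1 / v ^ 2) v := by
    have h1 : HasDerivAt (fun v : ℝ => 1 - v) (-1) v := by
      simpa using (hasDerivAt_id v).const_sub 1
    have := h1.div (hasDerivAt_id v) hv0.ne'
    refine this.congr_deriv ?_
    simp only [id]
    field_simp
    ring
  have hr : HasDerivAt (fun v : ℝ => ((1 - v) / v) ^ k)
      (-1 / v ^ 2 * k * ((1 - v) / v) ^ (k - 1)) v :=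
    hder_q.rpow_const (Or.inl hq.ne')
  have hkv : HasDerivAt (fun v : ℝ => k / v) (-(k / v ^ 2)) v := by
    have := (hasDerivAt_inv hv0.ne').const_mul k
    refine this.congr_deriv ?_
    field_simp
  have he : HasDerivAt (fun v : ℝ => Real.exp (k / v)) (Real.exp (k / v) * -(k / v ^ 2)) v :=
    hkv.exp
  have hmul := hr.mul he
  have : psi k = fun v => ((1 - v) / v) ^ k * Real.exp (k / v) := rfl
  rw [this]
  refine hmul.congr_deriv ?_
  have hq1 : ((1 - v) / v) ^ (k - 1) = ((1 - v) / v) ^ k / ((1 - v) / v) := by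
    rw [Real.rpow_sub hq, Real.rpow_one]
  rw [hq1]
  simp only
  field_simp
  ring

lemma psi_mul_g (hk : 0 < k) {v : ℝ} (hv : v ∈ Ioo (0:ℝ) 1) :
    psi k v * g k v = 1 / (v * (1 - v) ^ 2) := by
  obtain ⟨hv0, hv1⟩ := hv
  have h1v : 0 < 1 - v := by linarith
  have hvk : (0:ℝ) < v ^ k := Real.rpow_pos_of_pos hv0 k
  have h1vk : (0:ℝ) < (1 - v) ^ k := Real.rpow_pos_of_pos h1v k
  unfold psi g
  rw [Real.div_rpow h1v.le hv0.le]
  have e1 : (1 - v) ^ k * (1 - v) ^ (-k - 2) = ((1 - v) ^ (2:ℕ))⁻¹ := by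
    rw [← Real.rpow_add h1v, show k + (-k - 2) = -(2:ℕ) by push_cast; ring,
      Real.rpow_neg h1v.le, Real.rpow_natCast]
  have e2 : Real.exp (k / v) * Real.exp (-k / v) = 1 := by
    rw [← Real.exp_add]; simp [neg_div]
  have e3 : v ^ (k - 1) = v ^ k / v := by
    rw [Real.rpow_sub hv0, Real.rpow_one]
  rw [e3]
  rw [show (1 - v) ^ k / v ^ k * Real.exp (k / v) * (v ^ k / v * (1 - v) ^ (-k - 2) * Real.exp (-k / v))
      = ((1 - v) ^ k * (1 - v) ^ (-k - 2)) * (Real.exp (k / v) * Real.exp (-k / v)) * (v ^ k / v ^ k) / v by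
    field_simp]
  rw [e1, e2, div_self hvk.ne']
  field_simp

lemma phi_hasDerivAt (hk : 0 < k) {v : ℝ} (hv : v ∈ Ioo (0:ℝ) 1) :
    HasDerivAt (phi k)
      (-k * phi k v / (v ^ 2 * (1 - v)) + 1 / (v * (1 - v) ^ 2)) v := by
  have h := (psi_hasDerivAt hk hv).mul (G_hasDerivAt hk hv)
  have : phi k = fun v => psi k v * G k v := rfl
  rw [this]
  refine h.congr_deriv ?_
  rw [psi_mul_g hk hv]
  simp only
  ring


/-- first derivative candidate -/
def M1 (k ν x : ℝ) : ℝ :=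
  2 / ν * F k (x / (1 + x)) + 2 / ν * (phi k (x / (1 + x)) * (1 + x)⁻¹)

/-- second derivative candidate -/
def D2 (k ν x : ℝ) : ℝ :=
  2 / ν * (-k * phi k (x / (1 + x)) / ((x / (1 + x)) ^ 2 * (1 - x / (1 + x)))
    + 1 / ((x / (1 + x)) * (1 - x / (1 + x)) ^ 2)) / (1 + x) ^ 3

lemma y_mem {x : ℝ} (hx : 0 < x) : x / (1 + x) ∈ Ioo (0:ℝ) 1 :=
  ⟨div_pos hx (by linarith), (div_lt_one (by linarith)).2 (by linarith)⟩

lemma y_hasDerivAt {x : ℝ} (hx : 0 < x) :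
    HasDerivAt (fun x : ℝ => x / (1 + x)) (1 / (1 + x) ^ 2) x := by
  have h1x : (1 + x) ≠ 0 := by positivity
  have h1 : HasDerivAt (fun x : ℝ => 1 + x) 1 x := by
    simpa using (hasDerivAt_id x).const_add 1
  have := (hasDerivAt_id x).div h1 h1x
  refine this.congr_deriv ?_
  simp only [id]
  field_simp
  ring

lemma Mtilde_hasDerivAt {ν lam : ℝ} (hν : 0 < ν) (hlam : 0 < lam) {x : ℝ} (hx : 0 < x) :
    HasDerivAt (Mtilde ν lam) (M1 (2 * lam / ν) ν x) x := by
  have hk : 0 < 2 * lam / ν := by positivity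
  have h1x : (0:ℝ) < 1 + x := by linarith
  have hy := y_mem hx
  have hFc : HasDerivAt (fun x : ℝ => F (2 * lam / ν) (x / (1 + x)))
      (phi (2 * lam / ν) (x / (1 + x)) * (1 / (1 + x) ^ 2)) x := by
    have hc := (F_hasDerivAt hk hy).comp x (y_hasDerivAt hx); exact hc
  have h1 : HasDerivAt (fun x : ℝ => 1 + x) 1 x := by
    simpa using (hasDerivAt_id x).const_add 1
  have h2 := (h1.mul hFc).const_mul (2 / ν)
  have hM : Mtilde ν lam = fun x => 2 / ν * ((1 + x) * F (2 * lam / ν) (x / (1 + x))) := by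
    funext x
    show 2 / ν * (1 + x) * F (2 * lam / ν) (x / (1 + x)) = _
    ring
  rw [hM]
  refine h2.congr_deriv ?_
  unfold M1
  field_simp

lemma M1_hasDerivAt {ν lam : ℝ} (hν : 0 < ν) (hlam : 0 < lam) {x : ℝ} (hx : 0 < x) :
    HasDerivAt (M1 (2 * lam / ν) ν) (D2 (2 * lam / ν) ν x) x := by
  have hk : 0 < 2 * lam / ν := by positivity
  have h1x : (0:ℝ) < 1 + x := by linarith
  have hy := y_mem hx
  have hyd := y_hasDerivAt hx
  have hFc : HasDerivAt (fun x : ℝ => F (2 * lam / ν) (x / (1 + x)))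
      (phi (2 * lam / ν) (x / (1 + x)) * (1 / (1 + x) ^ 2)) x := by
    have hc := (F_hasDerivAt hk hy).comp x hyd; exact hc
  have hphic : HasDerivAt (fun x : ℝ => phi (2 * lam / ν) (x / (1 + x)))
      ((-(2 * lam / ν) * phi (2 * lam / ν) (x / (1 + x)) /
          ((x / (1 + x)) ^ 2 * (1 - x / (1 + x)))
        + 1 / ((x / (1 + x)) * (1 - x / (1 + x)) ^ 2)) * (1 / (1 + x) ^ 2)) x := by
    exact (phi_hasDerivAt hk hy).comp x hyd
  have h1 : HasDerivAt (fun x : ℝ => 1 + x) 1 x := by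
    simpa using (hasDerivAt_id x).const_add 1
  have hinv : HasDerivAt (fun x : ℝ => (1 + x)⁻¹) (-1 / (1 + x) ^ 2) x := h1.inv h1x.ne'
  have total := (hFc.const_mul (2 / ν)).add ((hphic.mul hinv).const_mul (2 / ν))
  have hM1 : M1 (2 * lam / ν) ν = fun x =>
      2 / ν * F (2 * lam / ν) (x / (1 + x)) +
        2 / ν * (phi (2 * lam / ν) (x / (1 + x)) * (1 + x)⁻¹) := rfl
  rw [hM1]
  refine total.congr_deriv ?_
  unfold D2
  have hy0 : (0:ℝ) < x / (1 + x) := hy.1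
  have hy1 : (0:ℝ) < 1 - x / (1 + x) := by linarith [hy.2]
  field_simp
  ring

end MtildeAux

open MtildeAux in
theorem Mtilde_solves_ode (ν lam : ℝ) (hν : 0 < ν) (hlam : 0 < lam) :
    ∀ x ∈ Set.Ioi (0 : ℝ),
      DifferentiableAt ℝ (Mtilde ν lam) x ∧
      DifferentiableAt ℝ (deriv (Mtilde ν lam)) x ∧
      lam * (1 + x) * deriv (Mtilde ν lam) x +
        (ν / 2) * x ^ 2 * deriv (deriv (Mtilde ν lam)) x -
          lam * Mtilde ν lam x = x := by
  intro x hx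
  rw [Set.mem_Ioi] at hx
  have h1x : (0:ℝ) < 1 + x := by linarith
  have h1 := Mtilde_hasDerivAt hν hlam hx
  have hev : deriv (Mtilde ν lam) =ᶠ[nhds x] M1 (2 * lam / ν) ν := by
    filter_upwards [eventually_gt_nhds hx] with t ht
    exact (Mtilde_hasDerivAt hν hlam ht).deriv
  have h2 : HasDerivAt (deriv (Mtilde ν lam)) (D2 (2 * lam / ν) ν x) x :=
    (M1_hasDerivAt hν hlam hx).congr_of_eventuallyEq hev
  refine ⟨h1.differentiableAt, h2.differentiableAt, ?_⟩
  rw [h1.deriv, h2.deriv]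
  have hMx : Mtilde ν lam x = 2 / ν * (1 + x) * F (2 * lam / ν) (x / (1 + x)) := rfl
  rw [hMx]
  unfold M1 D2
  have hy := y_mem hx
  have hy1 : 1 - x / (1 + x) = 1 / (1 + x) := by field_simp; ring
  rw [hy1]
  field_simp
  ring


end
end

section
/- The function M is twice continuously differentiable on (0,∞)^N and satisfies the partial differential equation (L_Φ M)(φ) − λ M(φ) = Σ_{i=1}^N p_i φ_i − λ/c for every φ ∈ (0,∞)^N. -/
open MeasureTheory Set
open scoped ENNReal NNReal BigOperators

noncomputable section

/-- The function `M(φ) = Σ_i p_i M̃(φ_i) + 1/c`. -/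
def MM {N : ℕ} (ν lam c : ℝ) (p : Fin N → ℝ) (φ : Fin N → ℝ) : ℝ :=
  (∑ i, p i * Mtilde ν lam (φ i)) + 1 / c

/-- The infinitesimal generator `L_Φ` of the process `Φ`. -/
def genLPhi {n N : ℕ} (lam μ : ℝ) (S : Fin N → Finset (Fin n))
    (f : (Fin N → ℝ) → ℝ) (φ : Fin N → ℝ) : ℝ :=
  (∑ i, lam * (1 + φ i) * fderiv ℝ f φ (Pi.single i 1)) +
    (μ ^ 2 / 2) * ∑ i, ∑ j, ((S i ∩ S j).card : ℝ) * φ i * φ j *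
      fderiv ℝ (fun ψ => fderiv ℝ f ψ (Pi.single i 1)) φ (Pi.single j 1)

def hh (κ u : ℝ) : ℝ := u ^ (κ - 1) * (1 - u) ^ (-κ - 2) * Real.exp (-κ / u)
def GG (κ v : ℝ) : ℝ := ∫ u in Set.Ioc (0 : ℝ) v, hh κ u
def PP (κ v : ℝ) : ℝ := ((1 - v) / v) ^ κ * Real.exp (κ / v)
def gg (κ v : ℝ) : ℝ := PP κ v * GG κ v
def FF (κ y : ℝ) : ℝ := ∫ v in Set.Ioc (0 : ℝ) y, gg κ v

variable {κ : ℝ}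

lemma hh_cont (hκ : 0 < κ) : ContinuousOn (hh κ) (Ioo (0:ℝ) 1) := by
  intro v hv
  obtain ⟨h0, h1⟩ := hv
  apply ContinuousAt.continuousWithinAt
  have c1 : ContinuousAt (fun u : ℝ => u ^ (κ - 1)) v :=
    Real.continuousAt_rpow_const _ _ (Or.inl h0.ne')
  have c2 : ContinuousAt (fun u : ℝ => (1 - u) ^ (-κ - 2)) v := by
    have : ContinuousAt (fun u : ℝ => (1:ℝ) - u) v := by fun_prop
    exact (Real.continuousAt_rpow_const _ _ (Or.inl (by linarith))).comp this
  have c3 : ContinuousAt (fun u : ℝ => Real.exp (-κ / u)) v := by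
    exact Real.continuous_exp.continuousAt.comp (ContinuousAt.div continuousAt_const continuousAt_id h0.ne')
  exact (c1.mul c2).mul c3

lemma hh_nonneg (hκ : 0 < κ) {v u : ℝ} (hu : u ∈ Ioc (0:ℝ) v) (hv : v < 1) : 0 ≤ hh κ u := by
  obtain ⟨h0, h1⟩ := hu
  have h1u : (0:ℝ) < 1 - u := by linarith
  exact mul_nonneg (mul_nonneg (Real.rpow_nonneg h0.le _) (Real.rpow_nonneg h1u.le _))
    (Real.exp_pos _).le

lemma hh_le (hκ : 0 < κ) {v u : ℝ} (hv0 : 0 < v) (hv1 : v < 1) (hu : u ∈ Ioc (0:ℝ) v) :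
    hh κ u ≤ (1 - v) ^ (-κ - 2) * Real.exp (-κ / v) * u ^ (κ - 1) := by
  obtain ⟨h0, h1⟩ := hu
  have hu1 : u < 1 := lt_of_le_of_lt h1 hv1
  have e1 : (1 - u) ^ (-κ - 2) ≤ (1 - v) ^ (-κ - 2) :=
    Real.rpow_le_rpow_of_nonpos (by linarith) (by linarith) (by linarith)
  have e2 : Real.exp (-κ / u) ≤ Real.exp (-κ / v) := by
    apply Real.exp_le_exp.mpr
    rw [neg_div, neg_div, neg_le_neg_iff]
    exact div_le_div_of_nonneg_left hκ.le h0 h1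
  have hrp : (0:ℝ) ≤ u ^ (κ - 1) := Real.rpow_nonneg h0.le _
  calc u ^ (κ - 1) * (1 - u) ^ (-κ - 2) * Real.exp (-κ / u)
      ≤ u ^ (κ - 1) * (1 - v) ^ (-κ - 2) * Real.exp (-κ / v) := by
        have h1v : (0:ℝ) < 1 - v := by linarith
        apply mul_le_mul (mul_le_mul_of_nonneg_left e1 hrp) e2 (Real.exp_pos _).le
        exact mul_nonneg hrp (Real.rpow_nonneg h1v.le _)
    _ = (1 - v) ^ (-κ - 2) * Real.exp (-κ / v) * u ^ (κ - 1) := by ring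

lemma rpow_integrableOn {r v : ℝ} (hr : -1 < r) (hv : 0 ≤ v) :
    IntegrableOn (fun u : ℝ => u ^ r) (Ioc 0 v) := by
  have := intervalIntegral.intervalIntegrable_rpow' (a := (0:ℝ)) (b := v) hr
  rwa [intervalIntegrable_iff_integrableOn_Ioc_of_le hv] at this

lemma hh_integrableOn (hκ : 0 < κ) {v : ℝ} (hv0 : 0 < v) (hv1 : v < 1) :
    IntegrableOn (hh κ) (Ioc 0 v) := by
  have hmeas : AEStronglyMeasurable (hh κ) (volume.restrict (Ioc 0 v)) := by
    apply ((hh_cont hκ).mono ?_).aestronglyMeasurable measurableSet_Ioc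
    exact fun u hu => ⟨hu.1, lt_of_le_of_lt hu.2 hv1⟩
  have hintb : IntegrableOn (fun u : ℝ => (1 - v) ^ (-κ - 2) * Real.exp (-κ / v) * u ^ (κ - 1)) (Ioc 0 v) :=
    (rpow_integrableOn (by linarith) hv0.le).const_mul _
  apply Integrable.mono' hintb hmeas
  filter_upwards [ae_restrict_mem measurableSet_Ioc] with u hu
  rw [Real.norm_eq_abs, abs_of_nonneg (hh_nonneg hκ hu hv1)]
  exact hh_le hκ hv0 hv1 hu

lemma integral_rpow_Ioc {r v : ℝ} (hr : -1 < r) (hv : 0 ≤ v) :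
    ∫ u in Ioc (0:ℝ) v, u ^ r = v ^ (r + 1) / (r + 1) := by
  rw [← intervalIntegral.integral_of_le hv, integral_rpow (Or.inl hr)]
  rw [Real.zero_rpow (by linarith : r + 1 ≠ 0)]
  ring

lemma GG_nonneg (hκ : 0 < κ) {v : ℝ} (hv1 : v < 1) : 0 ≤ GG κ v := by
  rcases le_or_gt v 0 with h | h
  · rw [GG, Ioc_eq_empty (by simpa using h), setIntegral_empty]
  · exact setIntegral_nonneg measurableSet_Ioc (fun u hu => hh_nonneg hκ hu hv1)

lemma GG_le (hκ : 0 < κ) {v : ℝ} (hv0 : 0 < v) (hv1 : v < 1) :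
    GG κ v ≤ (1 - v) ^ (-κ - 2) * Real.exp (-κ / v) * (v ^ κ / κ) := by
  have h1 : GG κ v ≤ ∫ u in Ioc (0:ℝ) v, (1 - v) ^ (-κ - 2) * Real.exp (-κ / v) * u ^ (κ - 1) := by
    apply setIntegral_mono_on (hh_integrableOn hκ hv0 hv1)
      ((rpow_integrableOn (by linarith) hv0.le).const_mul _) measurableSet_Ioc
    exact fun u hu => hh_le hκ hv0 hv1 hu
  calc GG κ v ≤ _ := h1
    _ = (1 - v) ^ (-κ - 2) * Real.exp (-κ / v) * ∫ u in Ioc (0:ℝ) v, u ^ (κ - 1) := by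
        rw [integral_const_mul]
    _ = (1 - v) ^ (-κ - 2) * Real.exp (-κ / v) * (v ^ κ / κ) := by
        rw [integral_rpow_Ioc (by linarith) hv0.le]; ring_nf

lemma PP_nonneg (hκ : 0 < κ) {v : ℝ} (hv0 : 0 < v) (hv1 : v < 1) : 0 ≤ PP κ v := by
  have h : (0:ℝ) ≤ (1 - v) / v := by
    have : (0:ℝ) < 1 - v := by linarith
    positivity
  exact mul_nonneg (Real.rpow_nonneg h _) (Real.exp_pos _).le

lemma gg_nonneg (hκ : 0 < κ) {v : ℝ} (hv0 : 0 < v) (hv1 : v < 1) : 0 ≤ gg κ v :=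
  mul_nonneg (PP_nonneg hκ hv0 hv1) (GG_nonneg hκ hv1)

lemma PP_eq (hκ : 0 < κ) {v : ℝ} (hv0 : 0 < v) (hv1 : v < 1) :
    PP κ v = (1 - v) ^ κ * v ^ (-κ) * Real.exp (κ / v) := by
  have h1v : (0:ℝ) < 1 - v := by linarith
  unfold PP
  rw [Real.div_rpow h1v.le hv0.le, Real.rpow_neg hv0.le, div_eq_mul_inv]

lemma PP_mul_hh (hκ : 0 < κ) {v : ℝ} (hv0 : 0 < v) (hv1 : v < 1) :
    PP κ v * hh κ v = 1 / (v * (1 - v) ^ 2) := by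
  have h1v : (0:ℝ) < 1 - v := by linarith
  rw [PP_eq hκ hv0 hv1]
  unfold hh
  calc (1 - v) ^ κ * v ^ (-κ) * Real.exp (κ / v) *
        (v ^ (κ - 1) * (1 - v) ^ (-κ - 2) * Real.exp (-κ / v))
      = ((1 - v) ^ κ * (1 - v) ^ (-κ - 2)) * (v ^ (-κ) * v ^ (κ - 1)) *
        (Real.exp (κ / v) * Real.exp (-κ / v)) := by ring
    _ = (1 - v) ^ (κ + (-κ - 2)) * v ^ (-κ + (κ - 1)) * Real.exp (κ / v + -κ / v) := by
        rw [← Real.rpow_add h1v, ← Real.rpow_add hv0, ← Real.exp_add]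
    _ = 1 / (v * (1 - v) ^ 2) := by
        rw [show κ + (-κ - 2) = -((2:ℕ):ℝ) by push_cast; ring,
          show -κ + (κ - 1) = (-1:ℝ) by ring,
          show κ / v + -κ / v = 0 by ring, Real.exp_zero,
          Real.rpow_neg_one, Real.rpow_neg h1v.le, Real.rpow_natCast]
        field_simp

lemma gg_le (hκ : 0 < κ) {v : ℝ} (hv0 : 0 < v) (hv1 : v < 1) :
    gg κ v ≤ 1 / ((1 - v) ^ 2 * κ) := by
  have h1v : (0:ℝ) < 1 - v := by linarith
  have hP := PP_nonneg hκ hv0 hv1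
  have hb := mul_le_mul_of_nonneg_left (GG_le hκ hv0 hv1) hP
  refine le_trans hb (le_of_eq ?_)
  rw [PP_eq hκ hv0 hv1]
  calc (1 - v) ^ κ * v ^ (-κ) * Real.exp (κ / v) *
        ((1 - v) ^ (-κ - 2) * Real.exp (-κ / v) * (v ^ κ / κ))
      = ((1 - v) ^ κ * (1 - v) ^ (-κ - 2)) * (v ^ (-κ) * v ^ κ) *
        (Real.exp (κ / v) * Real.exp (-κ / v)) / κ := by ring
    _ = (1 - v) ^ (κ + (-κ - 2)) * v ^ (-κ + κ) * Real.exp (κ / v + -κ / v) / κ := by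
        rw [← Real.rpow_add h1v, ← Real.rpow_add hv0, ← Real.exp_add]
    _ = 1 / ((1 - v) ^ 2 * κ) := by
        rw [show κ + (-κ - 2) = -((2:ℕ):ℝ) by push_cast; ring,
          show -κ + κ = (0:ℝ) by ring, Real.rpow_zero,
          show κ / v + -κ / v = 0 by ring, Real.exp_zero,
          Real.rpow_neg h1v.le, Real.rpow_natCast]
        field_simp

lemma GG_hasDerivAt (hκ : 0 < κ) {v : ℝ} (hv0 : 0 < v) (hv1 : v < 1) :
    HasDerivAt (GG κ) (hh κ v) v := by
  have hmem : v ∈ Ioo (0:ℝ) 1 := ⟨hv0, hv1⟩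
  have hii : IntervalIntegrable (hh κ) volume 0 v := by
    rw [intervalIntegrable_iff_integrableOn_Ioc_of_le hv0.le]
    exact hh_integrableOn hκ hv0 hv1
  have hsm : StronglyMeasurableAtFilter (hh κ) (nhds v) :=
    (hh_cont hκ).stronglyMeasurableAtFilter isOpen_Ioo v hmem
  have hca : ContinuousAt (hh κ) v :=
    (hh_cont hκ).continuousAt (isOpen_Ioo.mem_nhds hmem)
  have hder : HasDerivAt (fun w => ∫ u in (0:ℝ)..w, hh κ u) (hh κ v) v :=
    intervalIntegral.integral_hasDerivAt_right hii hsm hca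
  apply hder.congr_of_eventuallyEq
  filter_upwards [Ioi_mem_nhds hv0] with w hw
  rw [GG, intervalIntegral.integral_of_le (le_of_lt hw)]

lemma GG_cont (hκ : 0 < κ) : ContinuousOn (GG κ) (Ioo (0:ℝ) 1) := fun v hv =>
  ((GG_hasDerivAt hκ hv.1 hv.2).continuousAt).continuousWithinAt

def PP' (κ v : ℝ) : ℝ := -κ / (v ^ 2 * (1 - v)) * PP κ v

lemma PP_hasDerivAt (hκ : 0 < κ) {v : ℝ} (hv0 : 0 < v) (hv1 : v < 1) :
    HasDerivAt (PP κ) (PP' κ v) v := by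
  have h1v : (0:ℝ) < 1 - v := by linarith
  have ha : HasDerivAt (fun v : ℝ => (1 - v) / v) (-1 / v ^ 2) v := by
    have h1 : HasDerivAt (fun v : ℝ => 1 - v) (-1) v := by
      simpa using (hasDerivAt_id v).const_sub 1
    have := h1.fun_div (hasDerivAt_id v) hv0.ne'
    exact this.congr_deriv (by simp only [id_eq]; ring)
  have hapos : (0:ℝ) < (1 - v) / v := by positivity
  have hrp : HasDerivAt (fun v : ℝ => ((1 - v) / v) ^ κ)
      (κ * ((1 - v) / v) ^ (κ - 1) * (-1 / v ^ 2)) v :=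
    (ha.rpow_const (Or.inl hapos.ne')).congr_deriv (by ring)
  have hex : HasDerivAt (fun v : ℝ => Real.exp (κ / v)) (Real.exp (κ / v) * (-κ / v ^ 2)) v := by
    have hq : HasDerivAt (fun v : ℝ => κ / v) (-κ / v ^ 2) v := by
      have h := (hasDerivAt_inv hv0.ne').const_mul κ
      simp only [div_eq_mul_inv]
      exact h.congr_deriv (by ring)
    exact (Real.hasDerivAt_exp _).comp v hq |>.congr_deriv (by ring)
  have := hrp.mul hex
  have heq : κ * ((1 - v) / v) ^ (κ - 1) * (-1 / v ^ 2) * Real.exp (κ / v) +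
      ((1 - v) / v) ^ κ * (Real.exp (κ / v) * (-κ / v ^ 2)) = PP' κ v := by
    rw [PP', PP, Real.rpow_sub hapos, Real.rpow_one]
    field_simp
    ring
  exact heq ▸ this

def gg' (κ v : ℝ) : ℝ := PP' κ v * GG κ v + PP κ v * hh κ v

lemma gg_hasDerivAt (hκ : 0 < κ) {v : ℝ} (hv0 : 0 < v) (hv1 : v < 1) :
    HasDerivAt (gg κ) (gg' κ v) v :=
  (PP_hasDerivAt hκ hv0 hv1).mul (GG_hasDerivAt hκ hv0 hv1)

lemma gg_ode (hκ : 0 < κ) {v : ℝ} (hv0 : 0 < v) (hv1 : v < 1) :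
    v ^ 2 * (1 - v) * gg' κ v + κ * gg κ v = v / (1 - v) := by
  have h1v : (0:ℝ) < 1 - v := by linarith
  rw [gg', PP', gg]
  have hph := PP_mul_hh hκ hv0 hv1
  have e : v ^ 2 * (1 - v) * (-κ / (v ^ 2 * (1 - v)) * PP κ v * GG κ v + PP κ v * hh κ v) +
      κ * (PP κ v * GG κ v) = v ^ 2 * (1 - v) * (PP κ v * hh κ v) := by
    field_simp
    ring
  rw [e, hph]
  field_simp

lemma gg_cont (hκ : 0 < κ) : ContinuousOn (gg κ) (Ioo (0:ℝ) 1) := fun v hv =>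
  ((gg_hasDerivAt hκ hv.1 hv.2).continuousAt).continuousWithinAt

lemma PP_cont (hκ : 0 < κ) : ContinuousOn (PP κ) (Ioo (0:ℝ) 1) := fun v hv =>
  ((PP_hasDerivAt hκ hv.1 hv.2).continuousAt).continuousWithinAt

lemma gg'_cont (hκ : 0 < κ) : ContinuousOn (gg' κ) (Ioo (0:ℝ) 1) := by
  apply ContinuousOn.add
  · apply ContinuousOn.mul ?_ (GG_cont hκ)
    apply ContinuousOn.mul ?_ (PP_cont hκ)
    intro v hv
    apply ContinuousWithinAt.div continuousWithinAt_const
    · exact Continuous.continuousWithinAt (by continuity)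
    · have h1 : (0:ℝ) < 1 - v := by linarith [hv.2]
      have h2 := hv.1
      positivity
  · exact (PP_cont hκ).mul (hh_cont hκ)

lemma gg_integrableOn (hκ : 0 < κ) {y : ℝ} (hy0 : 0 < y) (hy1 : y < 1) :
    IntegrableOn (gg κ) (Ioc 0 y) := by
  have hmeas : AEStronglyMeasurable (gg κ) (volume.restrict (Ioc 0 y)) := by
    apply ((gg_cont hκ).mono ?_).aestronglyMeasurable measurableSet_Ioc
    exact fun v hv => ⟨hv.1, lt_of_le_of_lt hv.2 hy1⟩
  apply Integrable.mono'
    (integrableOn_const (C := 1 / ((1 - y) ^ 2 * κ)) measure_Ioc_lt_top.ne) hmeas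
  filter_upwards [ae_restrict_mem measurableSet_Ioc] with v hv
  have hv1 : v < 1 := lt_of_le_of_lt hv.2 hy1
  have h1v : (0:ℝ) < 1 - v := by linarith
  have h1y : (0:ℝ) < 1 - y := by linarith
  rw [Real.norm_eq_abs, abs_of_nonneg (gg_nonneg hκ hv.1 hv1)]
  refine le_trans (gg_le hκ hv.1 hv1) ?_
  apply div_le_div_of_nonneg_left one_pos.le (by positivity)
  have : (1 - y) ^ 2 ≤ (1 - v) ^ 2 := by nlinarith [hv.2]
  nlinarith

lemma FF_hasDerivAt (hκ : 0 < κ) {y : ℝ} (hy0 : 0 < y) (hy1 : y < 1) :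
    HasDerivAt (FF κ) (gg κ y) y := by
  have hmem : y ∈ Ioo (0:ℝ) 1 := ⟨hy0, hy1⟩
  have hii : IntervalIntegrable (gg κ) volume 0 y := by
    rw [intervalIntegrable_iff_integrableOn_Ioc_of_le hy0.le]
    exact gg_integrableOn hκ hy0 hy1
  have hsm : StronglyMeasurableAtFilter (gg κ) (nhds y) :=
    (gg_cont hκ).stronglyMeasurableAtFilter isOpen_Ioo y hmem
  have hca : ContinuousAt (gg κ) y :=
    (gg_cont hκ).continuousAt (isOpen_Ioo.mem_nhds hmem)
  have hder : HasDerivAt (fun w => ∫ u in (0:ℝ)..w, gg κ u) (gg κ y) y :=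
    intervalIntegral.integral_hasDerivAt_right hii hsm hca
  apply hder.congr_of_eventuallyEq
  filter_upwards [Ioi_mem_nhds hy0] with w hw
  rw [FF, intervalIntegral.integral_of_le (le_of_lt hw)]

lemma FF_cont (hκ : 0 < κ) : ContinuousOn (FF κ) (Ioo (0:ℝ) 1) := fun v hv =>
  ((FF_hasDerivAt hκ hv.1 hv.2).continuousAt).continuousWithinAt

def Mt1 (ν lam x : ℝ) : ℝ :=
  (2 / ν) * (FF (2 * lam / ν) (x / (1 + x)) + gg (2 * lam / ν) (x / (1 + x)) / (1 + x))

def Mt2 (ν lam x : ℝ) : ℝ :=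
  (2 / ν) * (gg' (2 * lam / ν) (x / (1 + x)) / (1 + x) ^ 3)

lemma Mtilde_eq (ν lam x : ℝ) :
    Mtilde ν lam x = (2 / ν) * (1 + x) * FF (2 * lam / ν) (x / (1 + x)) := rfl

section xlevel
variable {ν lam x : ℝ} (hν : 0 < ν) (hlam : 0 < lam) (hx : 0 < x)

lemma hκ' (hν : 0 < ν) (hlam : 0 < lam) : 0 < 2 * lam / ν := by positivity

lemma y_mem (hx : 0 < x) : x / (1 + x) ∈ Ioo (0:ℝ) 1 := by
  constructor
  · positivity
  · rw [div_lt_one (by linarith)]; linarith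

lemma y_hasDerivAt (hx : 0 < x) :
    HasDerivAt (fun x : ℝ => x / (1 + x)) (1 / (1 + x) ^ 2) x := by
  have h1x : (0:ℝ) < 1 + x := by linarith
  have := (hasDerivAt_id x).fun_div ((hasDerivAt_id x).const_add 1) h1x.ne'
  exact this.congr_deriv (by simp only [id_eq]; ring)

lemma one_sub_y (hx : 0 < x) : 1 - x / (1 + x) = 1 / (1 + x) := by
  have h1x : (0:ℝ) < 1 + x := by linarith
  field_simp
  ring

lemma Mtilde_hasDerivAt (hν : 0 < ν) (hlam : 0 < lam) (hx : 0 < x) :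
    HasDerivAt (Mtilde ν lam) (Mt1 ν lam x) x := by
  have h1x : (0:ℝ) < 1 + x := by linarith
  have hy := y_mem hx
  have hκ := hκ' hν hlam
  have hFy : HasDerivAt (fun x : ℝ => FF (2 * lam / ν) (x / (1 + x)))
      (gg (2 * lam / ν) (x / (1 + x)) * (1 / (1 + x) ^ 2)) x :=
    ((FF_hasDerivAt hκ hy.1 hy.2).comp x (y_hasDerivAt hx) :)
  have hmain := (((hasDerivAt_id x).const_add 1).mul hFy).const_mul (2 / ν)
  apply HasDerivAt.congr_deriv (hmain.congr_of_eventuallyEq ?_) ?_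
  · filter_upwards with w
    simp only [id_eq, Pi.mul_apply]
    rw [Mtilde_eq]; ring
  · simp only [id_eq]
    rw [Mt1]
    field_simp

lemma Mt1_hasDerivAt (hν : 0 < ν) (hlam : 0 < lam) (hx : 0 < x) :
    HasDerivAt (Mt1 ν lam) (Mt2 ν lam x) x := by
  have h1x : (0:ℝ) < 1 + x := by linarith
  have hy := y_mem hx
  have hκ := hκ' hν hlam
  have hFy : HasDerivAt (fun x : ℝ => FF (2 * lam / ν) (x / (1 + x)))
      (gg (2 * lam / ν) (x / (1 + x)) * (1 / (1 + x) ^ 2)) x :=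
    ((FF_hasDerivAt hκ hy.1 hy.2).comp x (y_hasDerivAt hx) :)
  have hgy : HasDerivAt (fun x : ℝ => gg (2 * lam / ν) (x / (1 + x)))
      (gg' (2 * lam / ν) (x / (1 + x)) * (1 / (1 + x) ^ 2)) x :=
    ((gg_hasDerivAt hκ hy.1 hy.2).comp x (y_hasDerivAt hx) :)
  have hq := hgy.div ((hasDerivAt_id x).const_add 1) h1x.ne'
  have hmain := (hFy.add hq).const_mul (2 / ν)
  apply HasDerivAt.congr_deriv (hmain.congr_of_eventuallyEq ?_) ?_
  · filter_upwards with w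
    simp only [id_eq, Pi.add_apply, Pi.div_apply]
    rw [Mt1]
  · simp only [id_eq]
    rw [Mt2]
    field_simp
    ring

lemma Mtilde_ode (hν : 0 < ν) (hlam : 0 < lam) (hx : 0 < x) :
    lam * (1 + x) * Mt1 ν lam x + (ν / 2) * x ^ 2 * Mt2 ν lam x
      - lam * Mtilde ν lam x = x := by
  have h1x : (0:ℝ) < 1 + x := by linarith
  have hy := y_mem hx
  have hκ := hκ' hν hlam
  set κ := 2 * lam / ν with hκdef
  set y := x / (1 + x) with hydef
  have hode := gg_ode hκ hy.1 hy.2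
  have hyx : y = x / (1 + x) := hydef
  have h1y : 1 - y = 1 / (1 + x) := one_sub_y hx
  have hy' : y * (1 + x) = x := by rw [hydef]; field_simp
  rw [Mt1, Mt2, Mtilde_eq, ← hκdef, ← hydef]
  have hlameq : lam = κ * ν / 2 := by rw [hκdef]; field_simp
  rw [hlameq]
  have expand : κ * ν / 2 * (1 + x) * (2 / ν * (FF κ y + gg κ y / (1 + x))) +
      ν / 2 * x ^ 2 * (2 / ν * (gg' κ y / (1 + x) ^ 3)) -
      κ * ν / 2 * (2 / ν * (1 + x) * FF κ y)
      = κ * gg κ y + (y ^ 2 * (1 - y)) * gg' κ y := by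
    rw [h1y, hydef]
    field_simp
    ring
  rw [expand]
  rw [show κ * gg κ y + y ^ 2 * (1 - y) * gg' κ y
      = y ^ 2 * (1 - y) * gg' κ y + κ * gg κ y by ring, hode, h1y]
  rw [hydef]
  field_simp

end xlevel

section contdiff
variable {ν lam : ℝ}

lemma y_contOn : ContinuousOn (fun x : ℝ => x / (1 + x)) (Ioi (0:ℝ)) := by
  intro x hx
  have h1x : (1 + x) ≠ 0 := by have := mem_Ioi.mp hx; positivity
  exact (ContinuousAt.div continuousAt_id (by fun_prop) h1x).continuousWithinAt

lemma y_maps : MapsTo (fun x : ℝ => x / (1 + x)) (Ioi (0:ℝ)) (Ioo (0:ℝ) 1) :=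
  fun x hx => y_mem (mem_Ioi.mp hx)

lemma Mt2_contOn (hν : 0 < ν) (hlam : 0 < lam) : ContinuousOn (Mt2 ν lam) (Ioi (0:ℝ)) := by
  have hκ := hκ' hν hlam
  apply ContinuousOn.mul continuousOn_const
  apply ContinuousOn.div (((gg'_cont hκ).comp y_contOn y_maps)) (by fun_prop)
  intro x hx
  have := mem_Ioi.mp hx
  positivity

lemma Mtilde_contDiffOn (hν : 0 < ν) (hlam : 0 < lam) :
    ContDiffOn ℝ 2 (Mtilde ν lam) (Ioi (0:ℝ)) := by
  rw [show (2 : WithTop ℕ∞) = 1 + 1 from rfl,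
    contDiffOn_succ_iff_deriv_of_isOpen isOpen_Ioi]
  refine ⟨fun x hx => ((Mtilde_hasDerivAt hν hlam (mem_Ioi.mp hx)).differentiableAt).differentiableWithinAt, by simp, ?_⟩
  have hder : ∀ x ∈ Ioi (0:ℝ), deriv (Mtilde ν lam) x = Mt1 ν lam x :=
    fun x hx => (Mtilde_hasDerivAt hν hlam (mem_Ioi.mp hx)).deriv
  apply ContDiffOn.congr ?_ hder
  rw [show (1 : WithTop ℕ∞) = 0 + 1 from rfl,
    contDiffOn_succ_iff_deriv_of_isOpen isOpen_Ioi]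
  refine ⟨fun x hx => ((Mt1_hasDerivAt hν hlam (mem_Ioi.mp hx)).differentiableAt).differentiableWithinAt, by simp, ?_⟩
  have hder2 : ∀ x ∈ Ioi (0:ℝ), deriv (Mt1 ν lam) x = Mt2 ν lam x :=
    fun x hx => (Mt1_hasDerivAt hν hlam (mem_Ioi.mp hx)).deriv
  apply ContDiffOn.congr ?_ hder2
  exact contDiffOn_zero.mpr (Mt2_contOn hν hlam)

end contdiff

section multi
variable {N : ℕ} {ν lam c : ℝ} {p : Fin N → ℝ}

lemma isOpen_pos : IsOpen {φ : Fin N → ℝ | ∀ i, 0 < φ i} := by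
  have : {φ : Fin N → ℝ | ∀ i, 0 < φ i} = ⋂ i, (fun φ : Fin N → ℝ => φ i) ⁻¹' Ioi 0 := by
    ext φ; simp [mem_iInter]
  rw [this]
  exact isOpen_iInter_of_finite fun i => (continuous_apply i).isOpen_preimage _ isOpen_Ioi

lemma MM_hasFDerivAt (hν : 0 < ν) (hlam : 0 < lam) {ψ : Fin N → ℝ} (hψ : ∀ i, 0 < ψ i) :
    HasFDerivAt (MM ν lam c p)
      (∑ i, (p i * Mt1 ν lam (ψ i)) • ContinuousLinearMap.proj (R := ℝ) (φ := fun _ : Fin N => ℝ) i) ψ := by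
  have h : ∀ i : Fin N, HasFDerivAt (fun ψ : Fin N → ℝ => p i * Mtilde ν lam (ψ i))
      ((p i * Mt1 ν lam (ψ i)) • ContinuousLinearMap.proj (R := ℝ) (φ := fun _ : Fin N => ℝ) i) ψ := by
    intro i
    have h1 : HasFDerivAt (fun ψ : Fin N → ℝ => ψ i)
        (ContinuousLinearMap.proj (R := ℝ) (φ := fun _ : Fin N => ℝ) i) ψ :=
      hasFDerivAt_apply i ψ
    have h2 := (Mtilde_hasDerivAt hν hlam (hψ i)).comp_hasFDerivAt ψ h1
    have h3 := h2.const_mul (p i)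
    rw [smul_smul] at h3
    exact h3
  have hsum := HasFDerivAt.fun_sum (fun i (_ : i ∈ Finset.univ) => h i)
  exact hsum.add_const (1 / c)

lemma fderiv_MM_apply (hν : 0 < ν) (hlam : 0 < lam) {ψ : Fin N → ℝ} (hψ : ∀ i, 0 < ψ i)
    (j : Fin N) :
    fderiv ℝ (MM ν lam c p) ψ (Pi.single j 1) = p j * Mt1 ν lam (ψ j) := by
  rw [(MM_hasFDerivAt hν hlam hψ).fderiv]
  rw [ContinuousLinearMap.sum_apply]
  have : ∀ i : Fin N, ((p i * Mt1 ν lam (ψ i)) •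
      ContinuousLinearMap.proj (R := ℝ) (φ := fun _ : Fin N => ℝ) i) (Pi.single j 1)
      = (p i * Mt1 ν lam (ψ i)) * ((Pi.single j 1 : Fin N → ℝ) i) := by
    intro i
    rw [ContinuousLinearMap.smul_apply, ContinuousLinearMap.proj_apply, smul_eq_mul]
  rw [Finset.sum_congr rfl fun i _ => this i]
  simp [Pi.single_apply, mul_ite, mul_one, mul_zero, Finset.sum_ite_eq]

lemma fderiv2_MM_apply (hν : 0 < ν) (hlam : 0 < lam) {φ : Fin N → ℝ} (hφ : ∀ i, 0 < φ i)
    (i j : Fin N) :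
    fderiv ℝ (fun ψ => fderiv ℝ (MM ν lam c p) ψ (Pi.single i 1)) φ (Pi.single j 1)
      = if i = j then p i * Mt2 ν lam (φ i) else 0 := by
  have hev : (fun ψ => fderiv ℝ (MM ν lam c p) ψ (Pi.single i 1)) =ᶠ[nhds φ]
      (fun ψ => p i * Mt1 ν lam (ψ i)) := by
    filter_upwards [isOpen_pos.mem_nhds hφ] with ψ hψ
    exact fderiv_MM_apply hν hlam hψ i
  rw [Filter.EventuallyEq.fderiv_eq hev]
  have h1 : HasFDerivAt (fun ψ : Fin N → ℝ => ψ i)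
      (ContinuousLinearMap.proj (R := ℝ) (φ := fun _ : Fin N => ℝ) i) φ :=
    hasFDerivAt_apply i φ
  have h2 := (Mt1_hasDerivAt hν hlam (hφ i)).comp_hasFDerivAt φ h1
  have h3 := h2.const_mul (p i)
  rw [smul_smul] at h3
  have h4 : fderiv ℝ (fun ψ : Fin N → ℝ => p i * Mt1 ν lam (ψ i)) φ =
      (p i * Mt2 ν lam (φ i)) • ContinuousLinearMap.proj (R := ℝ) (φ := fun _ : Fin N => ℝ) i :=
    h3.fderiv
  rw [h4, ContinuousLinearMap.smul_apply, ContinuousLinearMap.proj_apply, smul_eq_mul,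
    Pi.single_apply]
  rcases eq_or_ne i j with h | h
  · simp [h]
  · simp [h, Ne.symm h]

end multi

lemma MM_contDiffOn {N : ℕ} {ν lam c : ℝ} {p : Fin N → ℝ} (hν : 0 < ν) (hlam : 0 < lam) :
    ContDiffOn ℝ 2 (MM ν lam c p) {φ : Fin N → ℝ | ∀ i, 0 < φ i} := by
  have hMM : MM ν lam c p = fun φ => (∑ i, p i * Mtilde ν lam (φ i)) + 1 / c := rfl
  rw [hMM]
  apply ContDiffOn.add ?_ contDiffOn_const
  apply ContDiffOn.sum fun i _ => ?_
  apply ContDiffOn.mul contDiffOn_const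
  have heval : ContDiffOn ℝ 2 (fun φ : Fin N → ℝ => φ i) {φ : Fin N → ℝ | ∀ i, 0 < φ i} :=
    (ContinuousLinearMap.proj (R := ℝ) (φ := fun _ : Fin N => ℝ) i).contDiff.contDiffOn
  exact (Mtilde_contDiffOn hν hlam).comp heval (fun φ hφ => hφ i)

theorem M_solves_pde
    (n k N : ℕ) (hk : 1 ≤ k) (hkn : k < n) (hN : N = n.choose k)
    (S : Fin N → Finset (Fin n)) (hSinj : Function.Injective S)
    (hScard : ∀ i, (S i).card = k)
    (μ lam c : ℝ) (hμ : μ ≠ 0) (hlam : 0 < lam) (hc : 0 < c)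
    (p : Fin N → ℝ) (hp : ∀ i, p i ∈ Set.Icc (0 : ℝ) 1) (hpsum : ∑ i, p i = 1) :
    ContDiffOn ℝ 2 (MM ((k : ℝ) * μ ^ 2) lam c p) {φ : Fin N → ℝ | ∀ i, 0 < φ i} ∧
    ∀ φ : Fin N → ℝ, (∀ i, 0 < φ i) →
      genLPhi lam μ S (MM ((k : ℝ) * μ ^ 2) lam c p) φ -
          lam * MM ((k : ℝ) * μ ^ 2) lam c p φ =
        (∑ i, p i * φ i) - lam / c := by
  have hν : (0:ℝ) < (k : ℝ) * μ ^ 2 := by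
    have hk' : (0:ℝ) < (k : ℝ) := by exact_mod_cast Nat.lt_of_lt_of_le Nat.zero_lt_one hk
    have : (0:ℝ) < μ ^ 2 := by positivity
    positivity
  set ν := (k : ℝ) * μ ^ 2 with hνdef
  refine ⟨MM_contDiffOn hν hlam, fun φ hφ => ?_⟩
  have e1 : ∀ i, fderiv ℝ (MM ν lam c p) φ (Pi.single i 1) = p i * Mt1 ν lam (φ i) :=
    fderiv_MM_apply hν hlam hφ
  have e2 : ∀ i j, fderiv ℝ (fun ψ => fderiv ℝ (MM ν lam c p) ψ (Pi.single i 1)) φ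
      (Pi.single j 1) = if i = j then p i * Mt2 ν lam (φ i) else 0 :=
    fderiv2_MM_apply hν hlam hφ
  rw [genLPhi]
  have s1 : ∑ i, lam * (1 + φ i) * fderiv ℝ (MM ν lam c p) φ (Pi.single i 1)
      = ∑ i, lam * (1 + φ i) * (p i * Mt1 ν lam (φ i)) :=
    Finset.sum_congr rfl fun i _ => by rw [e1 i]
  have inner : ∀ i : Fin N, (∑ j, ((S i ∩ S j).card : ℝ) * φ i * φ j *
      (if i = j then p i * Mt2 ν lam (φ i) else 0))
      = (k:ℝ) * φ i * φ i * (p i * Mt2 ν lam (φ i)) := by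
    intro i
    rw [Finset.sum_eq_single i]
    · rw [if_pos rfl, Finset.inter_self, hScard]
    · intro j _ hj
      rw [if_neg fun h => hj h.symm, mul_zero]
    · intro h; exact absurd (Finset.mem_univ i) h
  have s2 : ∑ i, ∑ j, ((S i ∩ S j).card : ℝ) * φ i * φ j *
      fderiv ℝ (fun ψ => fderiv ℝ (MM ν lam c p) ψ (Pi.single i 1)) φ (Pi.single j 1)
      = ∑ i, (k:ℝ) * φ i * φ i * (p i * Mt2 ν lam (φ i)) := by
    refine Finset.sum_congr rfl fun i _ => ?_
    rw [← inner i]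
    exact Finset.sum_congr rfl fun j _ => by rw [e2 i j]
  rw [s1, s2, MM]
  have hterm : ∀ i : Fin N, lam * (1 + φ i) * (p i * Mt1 ν lam (φ i)) +
      (μ ^ 2 / 2) * ((k:ℝ) * φ i * φ i * (p i * Mt2 ν lam (φ i))) -
      lam * (p i * Mtilde ν lam (φ i)) = p i * φ i := by
    intro i
    have h := Mtilde_ode hν hlam (hφ i)
    rw [hνdef] at h
    linear_combination p i * h
  calc (∑ i, lam * (1 + φ i) * (p i * Mt1 ν lam (φ i))) +
        (μ ^ 2 / 2) * (∑ i, (k:ℝ) * φ i * φ i * (p i * Mt2 ν lam (φ i))) -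
        lam * ((∑ i, p i * Mtilde ν lam (φ i)) + 1 / c)
      = (∑ i, (lam * (1 + φ i) * (p i * Mt1 ν lam (φ i)) +
          (μ ^ 2 / 2) * ((k:ℝ) * φ i * φ i * (p i * Mt2 ν lam (φ i))) -
          lam * (p i * Mtilde ν lam (φ i)))) - lam / c := by
        rw [Finset.sum_sub_distrib, Finset.sum_add_distrib, ← Finset.mul_sum, ← Finset.mul_sum]
        ring
    _ = (∑ i, p i * φ i) - lam / c := by
        rw [Finset.sum_congr rfl fun i _ => hterm i]

end
end

section
/- There exists a unique φ_* ∈ (λ/c, ∞) satisfying the equation e^{κ(1+φ_*)/φ_*} φ_*^{−κ} ∫_0^{φ_*/(1+φ_*)} u^{κ−1} (1−u)^{−κ−2} e^{−κ/u} du = μ²/(2c). -/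
open MeasureTheory Set
open scoped BigOperators

noncomputable section

open Filter Real
open scoped Topology

namespace OneDimAux

variable {k : ℝ}

/-- The integrand. -/
def f (k u : ℝ) : ℝ := u ^ (k - 1) * (1 - u) ^ (-k - 2) * Real.exp (-k / u)

lemma f_contAt {u : ℝ} (hu : 0 < u) (hu1 : u < 1) : ContinuousAt (f k) u := by
  have h1 : ContinuousAt (fun u : ℝ => u ^ (k - 1)) u :=
    Real.continuousAt_rpow_const _ _ (Or.inl hu.ne')
  have h2 : ContinuousAt (fun u : ℝ => (1 - u) ^ (-k - 2)) u := by
    have : ContinuousAt (fun v : ℝ => v ^ (-k - 2)) (1 - u) :=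
      Real.continuousAt_rpow_const _ _ (Or.inl (by linarith))
    exact this.comp (continuousAt_const.sub continuousAt_id)
  have h3 : ContinuousAt (fun u : ℝ => Real.exp (-k / u)) u :=
    Real.continuous_exp.continuousAt.comp (continuousAt_const.div continuousAt_id hu.ne')
  exact (h1.mul h2).mul h3

lemma f_pos {u : ℝ} (hu : 0 < u) (hu1 : u < 1) : 0 < f k u := by
  have h1 := Real.rpow_pos_of_pos hu (k - 1)
  have h2 := Real.rpow_pos_of_pos (show (0:ℝ) < 1 - u by linarith) (-k - 2)
  have h3 := Real.exp_pos (-k / u)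
  exact mul_pos (mul_pos h1 h2) h3

lemma f_nonneg {u : ℝ} (hu : 0 < u) (hu1 : u < 1) : 0 ≤ f k u := (f_pos hu hu1).le

lemma f_tendsto_zero (hk : 0 < k) : Tendsto (f k) (𝓝[>] 0) (𝓝 0) := by
  have h1 : Tendsto (fun u : ℝ => (u⁻¹) ^ (1 - k) * Real.exp (-k * u⁻¹)) (𝓝[>] 0) (𝓝 0) :=
    (tendsto_rpow_mul_exp_neg_mul_atTop_nhds_zero (1 - k) k hk).comp tendsto_inv_nhdsGT_zero
  have h2 : Tendsto (fun u : ℝ => (1 - u) ^ (-k - 2)) (𝓝[>] 0) (𝓝 1) := by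
    have : ContinuousAt (fun u : ℝ => (1 - u) ^ (-k - 2)) 0 := by
      have : ContinuousAt (fun v : ℝ => v ^ (-k - 2)) (1 - 0) :=
        Real.continuousAt_rpow_const _ _ (Or.inl (by norm_num))
      exact this.comp (continuousAt_const.sub continuousAt_id)
    have h0 : ((1:ℝ) - 0) ^ (-k - 2) = 1 := by
      rw [sub_zero, Real.one_rpow]
    have h := this.continuousWithinAt (s := Ioi 0)
    rw [ContinuousWithinAt] at h
    simpa [h0] using h
  have key : Tendsto (fun u : ℝ => (u⁻¹) ^ (1 - k) * Real.exp (-k * u⁻¹) * (1 - u) ^ (-k - 2))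
      (𝓝[>] 0) (𝓝 0) := by simpa using h1.mul h2
  refine key.congr' ?_
  filter_upwards [self_mem_nhdsWithin] with u hu
  have hu : (0:ℝ) < u := hu
  have e1 : (u⁻¹) ^ (1 - k) = u ^ (k - 1) := by
    rw [Real.inv_rpow hu.le, ← Real.rpow_neg hu.le]
    norm_num
  have e2 : -k * u⁻¹ = -k / u := by ring
  rw [f, e1, e2]; ring


lemma f_integrableOn (hk : 0 < k) {s : ℝ} (hs1 : s < 1) :
    IntegrableOn (f k) (Ioc 0 s) := by
  rcases le_or_gt s 0 with h | hs0
  · rw [Set.Ioc_eq_empty (by linarith)]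
    exact integrableOn_empty
  -- extend by 0 at nonpositive reals
  set g : ℝ → ℝ := fun u => if u ≤ 0 then 0 else f k u with hg
  have hgf : ∀ u ∈ Ioc (0:ℝ) s, g u = f k u := by
    intro u hu
    simp [hg, not_le.2 hu.1]
  have hgcont : ContinuousOn g (Icc 0 s) := by
    intro u hu
    rcases eq_or_lt_of_le hu.1 with h0 | hpos
    · -- continuity at 0 within Icc
      have h0' : u = 0 := h0.symm
      subst h0'
      rw [ContinuousWithinAt]
      have hg0 : g 0 = 0 := by simp [hg]
      rw [hg0]
      have hicc : Icc (0:ℝ) s = insert 0 (Ioc 0 s) := (Set.Ioc_insert_left hs0.le).symm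
      rw [hicc, nhdsWithin_insert]
      refine Tendsto.sup ?_ ?_
      · simpa [hg0] using tendsto_pure_nhds g 0
      · refine ((f_tendsto_zero hk).mono_left (nhdsWithin_mono _ Ioc_subset_Ioi_self)).congr' ?_
        filter_upwards [self_mem_nhdsWithin] with v hv
        simp [hg, not_le.2 hv.1]
    · have hcf : ContinuousAt (f k) u := f_contAt hpos (lt_of_le_of_lt hu.2 hs1)
      have : ContinuousAt g u := by
        have hev : f k =ᶠ[nhds u] g := by
          filter_upwards [IsOpen.mem_nhds isOpen_Ioi hpos] with v hv
          simp [hg, not_le.2 (show (0:ℝ) < v from hv)]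
        exact hcf.congr hev
      exact this.continuousWithinAt
  have hgint : IntegrableOn g (Icc 0 s) := hgcont.integrableOn_Icc
  exact (hgint.mono_set Ioc_subset_Icc_self).congr_fun hgf measurableSet_Ioc


/-- The primitive. -/
def I (k r : ℝ) : ℝ := ∫ u in Ioc (0:ℝ) r, f k u

lemma I_hasDerivAt (hk : 0 < k) {r : ℝ} (hr0 : 0 < r) (hr1 : r < 1) :
    HasDerivAt (I k) (f k r) r := by
  set s := (1 + r) / 2 with hs
  have hrs : r < s := by rw [hs]; linarith
  have hs1 : s < 1 := by rw [hs]; linarith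
  -- the primitive as interval integral
  have hP : HasDerivAt (fun t => ∫ u in (0:ℝ)..t, f k u) (f k r) r := by
    refine intervalIntegral.integral_hasDerivAt_right ?_ ?_ (f_contAt hr0 hr1)
    · rw [intervalIntegrable_iff_integrableOn_Ioc_of_le hr0.le]
      exact (f_integrableOn hk hs1).mono_set (Set.Ioc_subset_Ioc le_rfl hrs.le)
    · exact ContinuousAt.stronglyMeasurableAtFilter isOpen_Ioo
        (fun x hx => f_contAt hx.1 hx.2) r ⟨hr0, hr1⟩
  refine hP.congr_of_eventuallyEq ?_
  filter_upwards [IsOpen.mem_nhds isOpen_Ioi hr0] with t ht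
  rw [I, intervalIntegral.integral_of_le (le_of_lt ht)]


lemma fs_eq {x : ℝ} (hx : 0 < x) :
    x ^ (-k) * f k (x / (1 + x)) = (1 + x) ^ 3 / x * Real.exp (-(k * (1 + x) / x)) := by
  have hx1 : (0:ℝ) < 1 + x := by linarith
  have h1 : (x / (1 + x)) ^ (k - 1) = x ^ (k - 1) / (1 + x) ^ (k - 1) :=
    Real.div_rpow hx.le hx1.le (k - 1)
  have h2 : (1 - x / (1 + x)) ^ (-k - 2) = (1 + x) ^ (k + 2) := by
    have : (1:ℝ) - x / (1 + x) = (1 + x)⁻¹ := by field_simp; ring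
    rw [this, Real.inv_rpow hx1.le, show (-k - 2 : ℝ) = -(k + 2) by ring,
      Real.rpow_neg hx1.le, inv_inv]
  have h3 : -k / (x / (1 + x)) = -(k * (1 + x) / x) := by
    field_simp
  rw [f, h1, h2, h3]
  have e2 : x ^ (-k) * x ^ (k-1) = x⁻¹ := by
    rw [← Real.rpow_add hx, show -k + (k - 1) = (-1:ℝ) by ring, Real.rpow_neg_one x]
  have e5 : (1 + x) ^ (k + 2) / (1 + x) ^ (k - 1) = (1 + x) ^ (3:ℝ) := by
    rw [← Real.rpow_sub hx1, show k + 2 - (k - 1) = (3:ℝ) by ring]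
  have e6 : ((1:ℝ) + x) ^ (3:ℝ) = (1 + x) ^ (3:ℕ) := by
    rw [← Real.rpow_natCast (1+x) 3]; norm_num
  calc x ^ (-k) * (x ^ (k - 1) / (1 + x) ^ (k - 1) * (1 + x) ^ (k + 2) * Real.exp (-(k * (1 + x) / x)))
      = (x ^ (-k) * x ^ (k-1)) * ((1 + x) ^ (k + 2) / (1 + x) ^ (k - 1)) * Real.exp (-(k * (1 + x) / x)) := by
        ring
    _ = x⁻¹ * (1 + x) ^ (3:ℕ) * Real.exp (-(k * (1 + x) / x)) := by rw [e2, e5, e6]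
    _ = (1 + x) ^ 3 / x * Real.exp (-(k * (1 + x) / x)) := by ring

/-- The main function. -/
def F (k x : ℝ) : ℝ := Real.exp (k * (1 + x) / x) * x ^ (-k) * I k (x / (1 + x))

lemma frac_mem {x : ℝ} (hx : 0 < x) : 0 < x / (1 + x) ∧ x / (1 + x) < 1 := by
  have hx1 : (0:ℝ) < 1 + x := by linarith
  constructor
  · positivity
  · rw [div_lt_one hx1]; linarith

lemma frac_hasDerivAt {x : ℝ} (hx : 0 < x) :
    HasDerivAt (fun x : ℝ => x / (1 + x)) (1 / (1 + x) ^ 2) x := by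
  have hx1 : (0:ℝ) < 1 + x := by linarith
  have h := (hasDerivAt_id x).div ((hasDerivAt_id x).const_add 1) hx1.ne'
  refine h.congr_deriv (Eq.symm ?_)
  simp

lemma F_hasDerivAt (hk : 0 < k) {x : ℝ} (hx : 0 < x) :
    HasDerivAt (F k) ((1 + x) / x * (1 - k * F k x / x)) x := by
  have hx1 : (0:ℝ) < 1 + x := by linarith
  obtain ⟨hs0, hs1⟩ := frac_mem hx
  have hIc : HasDerivAt (fun x : ℝ => I k (x / (1 + x)))
      (f k (x / (1 + x)) * (1 / (1 + x) ^ 2)) x := by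
    have h := (I_hasDerivAt hk hs0 hs1).comp x (frac_hasDerivAt hx); exact h
  have hu : HasDerivAt (fun x : ℝ => k * (1 + x) / x) (-(k / x ^ 2)) x := by
    have h := (((hasDerivAt_id x).const_add 1).const_mul k).div (hasDerivAt_id x) hx.ne'
    refine h.congr_deriv (Eq.symm ?_)
    simp only [id]
    field_simp
    ring
  have hE : HasDerivAt (fun x : ℝ => Real.exp (k * (1 + x) / x))
      (Real.exp (k * (1 + x) / x) * (-(k / x ^ 2))) x := hu.exp
  have hp : HasDerivAt (fun x : ℝ => x ^ (-k)) (-k * x ^ (-k - 1)) x :=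
    Real.hasDerivAt_rpow_const (p := -k) (Or.inl hx.ne')
  have h := (hE.mul hp).mul hIc
  refine h.congr_deriv (Eq.symm ?_)
  have e1 : Real.exp (k * (1 + x) / x) * Real.exp (-(k * (1 + x) / x)) = 1 := by
    rw [← Real.exp_add]; simp
  have e3 : x ^ (-k - 1) = x ^ (-k) * x⁻¹ := by
    rw [← Real.rpow_neg_one x, ← Real.rpow_add hx, show -k + (-1:ℝ) = -k - 1 by ring]
  have key : x * (Real.exp (k * (1 + x) / x) * (x ^ (-k) * f k (x / (1 + x)))) = (1 + x) ^ 3 := by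
    have hfs := fs_eq (k := k) hx
    rw [hfs]
    calc x * (Real.exp (k * (1 + x) / x) * ((1 + x) ^ 3 / x * Real.exp (-(k * (1 + x) / x))))
        = (x / x) * (1 + x) ^ 3 * (Real.exp (k * (1 + x) / x) * Real.exp (-(k * (1 + x) / x))) := by
          ring
      _ = (1 + x) ^ 3 := by rw [e1, div_self hx.ne']; ring
  simp only [F, Pi.mul_apply]
  rw [e3]
  field_simp
  rw [show (1 + x) * k / x = k * (1 + x) / x by ring]
  linear_combination (-x) * key


/-- Comparison function. -/
def Dl (k x : ℝ) : ℝ := x ^ (k + 1) / k * Real.exp (-(k * (1 + x) / x)) - I k (x / (1 + x))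

lemma Dl_hasDerivAt (hk : 0 < k) {x : ℝ} (hx : 0 < x) :
    HasDerivAt (Dl k) (Real.exp (-(k * (1 + x) / x)) * x ^ k / k) x := by
  have hx1 : (0:ℝ) < 1 + x := by linarith
  obtain ⟨hs0, hs1⟩ := frac_mem hx
  have hIc : HasDerivAt (fun x : ℝ => I k (x / (1 + x)))
      (f k (x / (1 + x)) * (1 / (1 + x) ^ 2)) x := by
    have h := (I_hasDerivAt hk hs0 hs1).comp x (frac_hasDerivAt hx); exact h
  have hu : HasDerivAt (fun x : ℝ => -(k * (1 + x) / x)) (k / x ^ 2) x := by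
    have h := ((((hasDerivAt_id x).const_add 1).const_mul k).div (hasDerivAt_id x) hx.ne').neg
    refine h.congr_deriv (Eq.symm ?_)
    simp only [id]
    field_simp
    ring
  have hE : HasDerivAt (fun x : ℝ => Real.exp (-(k * (1 + x) / x)))
      (Real.exp (-(k * (1 + x) / x)) * (k / x ^ 2)) x := hu.exp
  have hpw : HasDerivAt (fun x : ℝ => x ^ (k + 1)) ((k + 1) * x ^ k) x := by
    have h := Real.hasDerivAt_rpow_const (p := k + 1) (Or.inl hx.ne')
    simpa using h
  have h := (((hpw.div_const k).mul hE).sub hIc)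
  refine h.congr_deriv (Eq.symm ?_)
  -- value identity
  have hfs : f k (x / (1 + x)) = x ^ k * (1 + x) ^ 3 / x * Real.exp (-(k * (1 + x) / x)) := by
    have hfs0 := fs_eq (k := k) hx
    have hxk : x ^ k * x ^ (-k) = 1 := by
      rw [← Real.rpow_add hx, add_neg_cancel, Real.rpow_zero]
    calc f k (x / (1 + x)) = (x ^ k * x ^ (-k)) * f k (x / (1 + x)) := by rw [hxk]; ring
      _ = x ^ k * ((1 + x) ^ 3 / x * Real.exp (-(k * (1 + x) / x))) := by
          rw [mul_assoc, hfs0]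
      _ = x ^ k * (1 + x) ^ 3 / x * Real.exp (-(k * (1 + x) / x)) := by ring
  have ep1 : x ^ (k + 1) = x ^ k * x := by
    rw [Real.rpow_add hx, Real.rpow_one]
  rw [hfs, ep1]
  field_simp
  ring

lemma I_comp_tendsto_zero (hk : 0 < k) :
    Tendsto (fun x : ℝ => I k (x / (1 + x))) (𝓝[>] 0) (𝓝 0) := by
  have hIcc : IntegrableOn (f k) (Icc 0 (1/2 : ℝ)) := by
    rw [integrableOn_Icc_iff_integrableOn_Ioc]
    exact f_integrableOn hk (by norm_num)
  have hC := intervalIntegral.continuousOn_primitive (a := (0:ℝ)) (b := (1/2:ℝ)) hIcc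
  have h0 := (hC 0 ⟨le_rfl, by norm_num⟩)
  rw [ContinuousWithinAt] at h0
  have h0' : Tendsto (fun r : ℝ => I k r) (𝓝[Icc 0 (1/2)] 0) (𝓝 0) := by
    simpa [I, Set.Ioc_self] using h0
  refine h0'.comp ?_
  refine tendsto_nhdsWithin_of_tendsto_nhds_of_eventually_within _ ?_ ?_
  · have : ContinuousAt (fun x : ℝ => x / (1 + x)) 0 :=
      continuousAt_id.div (continuousAt_const.add continuousAt_id) (by norm_num)
    have := this.tendsto
    simpa using this.mono_left nhdsWithin_le_nhds
  · filter_upwards [Ioo_mem_nhdsGT (show (0:ℝ) < 1 by norm_num)] with x hx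
    have hx0 : (0:ℝ) < x := hx.1
    have hx1 : x < 1 := hx.2
    have hhx1 : (0:ℝ) < 1 + x := by linarith
    constructor
    · positivity
    · rw [div_le_iff₀ hhx1]; linarith

lemma Dl_tendsto_zero (hk : 0 < k) : Tendsto (Dl k) (𝓝[>] 0) (𝓝 0) := by
  have hJ : Tendsto (fun x : ℝ => x ^ (k + 1) / k * Real.exp (-(k * (1 + x) / x)))
      (𝓝[>] 0) (𝓝 0) := by
    have hbound : Tendsto (fun x : ℝ => x / k) (𝓝[>] 0) (𝓝 0) := by
      have := (tendsto_id.div_const k).mono_left (nhdsWithin_le_nhds (a := (0:ℝ)) (s := Ioi 0))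
      simpa using this
    refine tendsto_of_tendsto_of_tendsto_of_le_of_le' tendsto_const_nhds hbound ?_ ?_
    · filter_upwards [self_mem_nhdsWithin] with x hx
      have hx0 : (0:ℝ) < x := hx
      have h1 := Real.rpow_pos_of_pos hx0 (k + 1)
      have h2 := Real.exp_pos (-(k * (1 + x) / x))
      positivity
    · filter_upwards [Ioo_mem_nhdsGT (show (0:ℝ) < 1 by norm_num)] with x hx
      have hx0 : (0:ℝ) < x := hx.1
      have hx1 : x ≤ 1 := hx.2.le
      have e1 : x ^ (k + 1) ≤ x := by
        have := Real.rpow_le_rpow_of_exponent_ge hx0 hx1 (show (1:ℝ) ≤ k + 1 by linarith)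
        rwa [Real.rpow_one] at this
      have e2 : Real.exp (-(k * (1 + x) / x)) ≤ 1 := by
        rw [Real.exp_le_one_iff]
        have : 0 ≤ k * (1 + x) / x := by positivity
        linarith
      calc x ^ (k + 1) / k * Real.exp (-(k * (1 + x) / x))
          ≤ x ^ (k + 1) / k * 1 := by
            refine mul_le_mul_of_nonneg_left e2 ?_
            have := Real.rpow_pos_of_pos hx0 (k + 1)
            positivity
        _ = x ^ (k + 1) / k := by ring
        _ ≤ x / k := by
            gcongr
  have := hJ.sub (I_comp_tendsto_zero hk)
  rw [sub_zero] at this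
  exact this


lemma Dl_strictMono (hk : 0 < k) : StrictMonoOn (Dl k) (Ioi 0) := by
  refine strictMonoOn_of_deriv_pos (convex_Ioi 0) ?_ ?_
  · exact fun x hx => (Dl_hasDerivAt hk hx).continuousAt.continuousWithinAt
  · intro x hx
    rw [interior_Ioi] at hx
    rw [(Dl_hasDerivAt hk hx).deriv]
    have h1 := Real.rpow_pos_of_pos hx k
    have h2 := Real.exp_pos (-(k * (1 + x) / x))
    positivity

lemma Dl_pos (hk : 0 < k) {x : ℝ} (hx : 0 < x) : 0 < Dl k x := by
  have h2 : (0:ℝ) < x / 2 := by linarith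
  have hmid : 0 ≤ Dl k (x / 2) := by
    refine le_of_tendsto (Dl_tendsto_zero hk) ?_
    filter_upwards [Ioo_mem_nhdsGT h2] with y hy
    exact (Dl_strictMono hk hy.1 h2 hy.2).le
  have := Dl_strictMono hk h2 (show x ∈ Ioi (0:ℝ) from hx) (by linarith)
  linarith

lemma F_lt (hk : 0 < k) {x : ℝ} (hx : 0 < x) : F k x < x / k := by
  obtain ⟨hs0, hs1⟩ := frac_mem hx
  have hD := Dl_pos hk hx
  rw [Dl, sub_pos] at hD
  have hEP : 0 < Real.exp (k * (1 + x) / x) * x ^ (-k) := by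
    have := Real.rpow_pos_of_pos hx (-k)
    positivity
  have hmul := mul_lt_mul_of_pos_left hD hEP
  rw [F]
  calc Real.exp (k * (1 + x) / x) * x ^ (-k) * I k (x / (1 + x))
      < Real.exp (k * (1 + x) / x) * x ^ (-k) * (x ^ (k + 1) / k * Real.exp (-(k * (1 + x) / x))) := by
        exact hmul
    _ = (Real.exp (k * (1 + x) / x) * Real.exp (-(k * (1 + x) / x))) * (x ^ (-k) * x ^ (k + 1)) / k := by
        ring
    _ = x / k := by
        rw [← Real.exp_add, ← Real.rpow_add hx, show -k + (k + 1) = (1:ℝ) by ring,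
          Real.rpow_one, add_neg_cancel, Real.exp_zero, one_mul]

lemma F_strictMono (hk : 0 < k) : StrictMonoOn (F k) (Ioi 0) := by
  refine strictMonoOn_of_deriv_pos (convex_Ioi 0) ?_ ?_
  · exact fun x hx => (F_hasDerivAt hk hx).continuousAt.continuousWithinAt
  · intro x hx
    rw [interior_Ioi] at hx
    have hx : (0:ℝ) < x := hx
    rw [(F_hasDerivAt hk hx).deriv]
    have hF := F_lt hk hx
    have h1 : 0 < (1 + x) / x := by positivity
    have h2 : k * F k x / x < 1 := by
      rw [div_lt_one hx]
      calc k * F k x < k * (x / k) := by exact mul_lt_mul_of_pos_left hF hk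
        _ = x := by field_simp
    have h3 : 0 < 1 - k * F k x / x := by linarith
    positivity


lemma F_large (hk : 0 < k) {x : ℝ} (hx : 3 ≤ x) :
    (2:ℝ)⁻¹ ^ k * (2:ℝ)⁻¹ ^ (k + 2) * Real.exp (-(2 * k)) * x ≤ F k x := by
  have hx0 : (0:ℝ) < x := by linarith
  have hx1 : (0:ℝ) < 1 + x := by linarith
  obtain ⟨hs0, hs1⟩ := frac_mem hx0
  set s := x / (1 + x) with hs
  set a := (x - 1) / (1 + x) with ha
  have ha0 : 0 ≤ a := by rw [ha]; exact div_nonneg (by linarith) hx1.le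
  have hahalf : (2:ℝ)⁻¹ ≤ a := by
    rw [ha, le_div_iff₀ hx1]; linarith
  have has : a < s := by
    rw [ha, hs, div_lt_div_iff_of_pos_right hx1]; nlinarith
  have hsub : Ioc a s ⊆ Ioc 0 s := Set.Ioc_subset_Ioc ha0 le_rfl
  have hintS : IntegrableOn (f k) (Ioc 0 s) := f_integrableOn hk hs1
  set m := (2:ℝ)⁻¹ ^ k * (2 / (1 + x)) ^ (-k - 2) * Real.exp (-(2 * k)) with hm
  have hmpos : 0 < m := by
    rw [hm]
    have h1 := Real.rpow_pos_of_pos (show (0:ℝ) < 2⁻¹ by norm_num) k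
    have h2 := Real.rpow_pos_of_pos (show (0:ℝ) < 2 / (1 + x) by positivity) (-k - 2)
    positivity
  have hmle : ∀ u ∈ Ioc a s, m ≤ f k u := by
    intro u hu
    have hu0 : (0:ℝ) < u := lt_of_le_of_lt ha0 hu.1
    have huhalf : (2:ℝ)⁻¹ ≤ u := le_trans hahalf hu.1.le
    have hu1 : u < 1 := lt_of_le_of_lt hu.2 hs1
    have h1 : (2:ℝ)⁻¹ ^ k ≤ u ^ (k - 1) := by
      calc (2:ℝ)⁻¹ ^ k ≤ u ^ k := Real.rpow_le_rpow (by norm_num) huhalf hk.le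
        _ ≤ u ^ (k - 1) :=
          Real.rpow_le_rpow_of_exponent_ge hu0 hu1.le (by linarith)
    have h2 : (2 / (1 + x)) ^ (-k - 2) ≤ (1 - u) ^ (-k - 2) := by
      refine Real.rpow_le_rpow_of_nonpos (by linarith) ?_ (by linarith)
      -- 1 - u ≤ 2 / (1 + x)
      have : a < u := hu.1
      rw [ha, div_lt_iff₀ hx1] at this
      rw [le_div_iff₀ hx1]
      nlinarith
    have h3 : Real.exp (-(2 * k)) ≤ Real.exp (-k / u) := by
      rw [Real.exp_le_exp, neg_div, neg_le_neg_iff, div_le_iff₀ hu0]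
      nlinarith
    rw [f, hm]
    have hb1 : (0:ℝ) < (2:ℝ)⁻¹ ^ k := Real.rpow_pos_of_pos (by norm_num) k
    have hb2 : (0:ℝ) < (2 / (1 + x)) ^ (-k - 2) :=
      Real.rpow_pos_of_pos (by positivity) (-k - 2)
    have hb3 : (0:ℝ) < Real.exp (-(2 * k)) := Real.exp_pos _
    have hc1 : (0:ℝ) ≤ u ^ (k - 1) := le_trans hb1.le h1
    have hc2 : (0:ℝ) ≤ (1 - u) ^ (-k - 2) := le_trans hb2.le h2
    exact mul_le_mul (mul_le_mul h1 h2 hb2.le hc1) h3 hb3.le (by positivity)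
  have hvol : (volume (Ioc a s)).toReal = 1 / (1 + x) := by
    rw [Real.volume_Ioc, ENNReal.toReal_ofReal (by linarith)]
    rw [hs, ha]
    field_simp
    ring
  have hIlow : m * (1 / (1 + x)) ≤ I k s := by
    have step1 : m * (volume (Ioc a s)).toReal ≤ ∫ u in Ioc a s, f k u :=
      MeasureTheory.setIntegral_ge_of_const_le_real measurableSet_Ioc
        measure_Ioc_lt_top.ne hmle (hintS.mono_set hsub)
    have step2 : (∫ u in Ioc a s, f k u) ≤ ∫ u in Ioc 0 s, f k u := by
      refine MeasureTheory.setIntegral_mono_set hintS ?_ hsub.eventuallyLE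
      rw [Filter.EventuallyLE, MeasureTheory.ae_restrict_iff' measurableSet_Ioc]
      filter_upwards with u hu
      exact f_nonneg hu.1 (lt_of_le_of_lt hu.2 hs1)
    rw [hvol] at step1
    exact le_trans step1 step2
  -- from I lower bound to F lower bound
  have hP : (0:ℝ) < x ^ (-k) := Real.rpow_pos_of_pos hx0 _
  have hE1 : (1:ℝ) ≤ Real.exp (k * (1 + x) / x) := by
    rw [Real.one_le_exp_iff]
    positivity
  have hFlow : x ^ (-k) * (m * (1 / (1 + x))) ≤ F k x := by
    rw [F]
    have hI0 : 0 ≤ I k s := le_trans (by positivity) hIlow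
    calc x ^ (-k) * (m * (1 / (1 + x)))
        ≤ x ^ (-k) * I k s := by
          exact mul_le_mul_of_nonneg_left hIlow hP.le
      _ = 1 * (x ^ (-k) * I k s) := by ring
      _ ≤ Real.exp (k * (1 + x) / x) * (x ^ (-k) * I k s) := by
          exact mul_le_mul_of_nonneg_right hE1 (by positivity)
      _ = Real.exp (k * (1 + x) / x) * x ^ (-k) * I k (x / (1 + x)) := by
          rw [hs]; ring
  refine le_trans ?_ hFlow
  -- algebra: x^(-k) * (m / (1+x)) ≥ Cst * x
  have e1 : (2 / (1 + x)) ^ (-k - 2) = (2:ℝ)⁻¹ ^ (k + 2) * (1 + x) ^ (k + 2) := by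
    rw [Real.div_rpow (by norm_num) hx1.le, show (-k - 2 : ℝ) = -(k + 2) by ring,
      Real.rpow_neg (by norm_num : (0:ℝ) ≤ 2), Real.rpow_neg hx1.le,
      Real.inv_rpow (by norm_num : (0:ℝ) ≤ 2)]
    field_simp
  have e2 : (1 + x) ^ (k + 2) * (1 / (1 + x)) = (1 + x) ^ (k + 1) := by
    rw [show (k + 2 : ℝ) = (k + 1) + 1 by ring, Real.rpow_add hx1, Real.rpow_one]
    field_simp
  have e3 : x ^ (k + 1) ≤ (1 + x) ^ (k + 1) :=
    Real.rpow_le_rpow hx0.le (by linarith) (by linarith)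
  have e4 : x ^ (-k) * x ^ (k + 1) = x := by
    rw [← Real.rpow_add hx0, show -k + (k + 1) = (1:ℝ) by ring, Real.rpow_one]
  calc (2:ℝ)⁻¹ ^ k * (2:ℝ)⁻¹ ^ (k + 2) * Real.exp (-(2 * k)) * x
      = (2:ℝ)⁻¹ ^ k * (2:ℝ)⁻¹ ^ (k + 2) * Real.exp (-(2 * k)) * (x ^ (-k) * x ^ (k + 1)) := by
        rw [e4]
    _ ≤ (2:ℝ)⁻¹ ^ k * (2:ℝ)⁻¹ ^ (k + 2) * Real.exp (-(2 * k)) * (x ^ (-k) * (1 + x) ^ (k + 1)) := by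
        have hb1 : (0:ℝ) < (2:ℝ)⁻¹ ^ k := Real.rpow_pos_of_pos (by norm_num) k
        have hb2 : (0:ℝ) < (2:ℝ)⁻¹ ^ (k + 2) := Real.rpow_pos_of_pos (by norm_num) (k + 2)
        have := mul_le_mul_of_nonneg_left e3 hP.le
        have hb3 := Real.exp_pos (-(2 * k))
        exact mul_le_mul_of_nonneg_left this (by positivity)
    _ = x ^ (-k) * (m * (1 / (1 + x))) := by
        rw [hm, e1]
        rw [mul_comm ((2:ℝ)⁻¹ ^ (k + 2)) ((1 + x) ^ (k + 2))]
        rw [show (2:ℝ)⁻¹ ^ k * ((1 + x) ^ (k + 2) * (2:ℝ)⁻¹ ^ (k + 2)) * Real.exp (-(2 * k)) * (1 / (1 + x))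
          = (2:ℝ)⁻¹ ^ k * (2:ℝ)⁻¹ ^ (k + 2) * Real.exp (-(2 * k)) * ((1 + x) ^ (k + 2) * (1 / (1 + x))) by ring, e2]
        ring

end OneDimAux

open OneDimAux


theorem one_dimensional_boundary_exists_unique
    (μ lam c : ℝ) (hμ : μ ≠ 0) (hlam : 0 < lam) (hc : 0 < c) :
    ∃! x : ℝ, x ∈ Set.Ioi (lam / c) ∧
      Real.exp ((2 * lam / μ ^ 2) * (1 + x) / x) * x ^ (-(2 * lam / μ ^ 2)) *
          ∫ u in Set.Ioc (0 : ℝ) (x / (1 + x)),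
            u ^ (2 * lam / μ ^ 2 - 1) * (1 - u) ^ (-(2 * lam / μ ^ 2) - 2) *
              Real.exp (-(2 * lam / μ ^ 2) / u) =
        μ ^ 2 / (2 * c) := by
  have hμ2 : (0:ℝ) < μ ^ 2 := by
    rcases lt_or_gt_of_ne hμ with h | h
    · nlinarith
    · nlinarith
  set k : ℝ := 2 * lam / μ ^ 2 with hkdef
  have hk : 0 < k := by
    rw [hkdef]; positivity
  set a : ℝ := lam / c with hadef
  have ha0 : 0 < a := by rw [hadef]; positivity
  set T : ℝ := μ ^ 2 / (2 * c) with hTdef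
  have hT : T = a / k := by
    rw [hTdef, hadef, hkdef]
    field_simp
  have hgoal : ∀ x : ℝ,
      (Real.exp (k * (1 + x) / x) * x ^ (-k) *
        ∫ u in Set.Ioc (0 : ℝ) (x / (1 + x)),
          u ^ (k - 1) * (1 - u) ^ (-k - 2) * Real.exp (-k / u)) = F k x := fun x => rfl
  show ∃! x : ℝ, x ∈ Set.Ioi a ∧
      (Real.exp (k * (1 + x) / x) * x ^ (-k) *
        ∫ u in Set.Ioc (0 : ℝ) (x / (1 + x)),
          u ^ (k - 1) * (1 - u) ^ (-k - 2) * Real.exp (-k / u)) = T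
  simp only [hgoal]
  -- pick the right endpoint
  set Cst : ℝ := (2:ℝ)⁻¹ ^ k * (2:ℝ)⁻¹ ^ (k + 2) * Real.exp (-(2 * k)) with hCdef
  have hCpos : 0 < Cst := by
    rw [hCdef]
    have h1 := Real.rpow_pos_of_pos (show (0:ℝ) < 2⁻¹ by norm_num) k
    have h2 := Real.rpow_pos_of_pos (show (0:ℝ) < 2⁻¹ by norm_num) (k + 2)
    positivity
  set b : ℝ := max 3 (max (a + 1) ((T + 1) / Cst + 3)) with hbdef
  have hb3 : (3:ℝ) ≤ b := le_max_left _ _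
  have hab : a < b := by
    have := le_trans (le_max_left (a + 1) ((T + 1) / Cst + 3)) (le_max_right 3 _)
    rw [← hbdef] at this
    linarith
  have hb0 : 0 < b := by linarith
  have hFa : F k a < T := by rw [hT]; exact F_lt hk ha0
  have hFb : T < F k b := by
    have h1 : (T + 1) / Cst ≤ b := by
      have := le_trans (le_max_right (a + 1) ((T + 1) / Cst + 3)) (le_max_right 3 _)
      rw [← hbdef] at this
      linarith
    have h2 : T + 1 ≤ Cst * b := by
      rw [div_le_iff₀ hCpos] at h1
      linarith [h1]
    have h3 := F_large hk hb3
    rw [← hCdef] at h3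
    linarith
  have hcont : ContinuousOn (F k) (Icc a b) := fun x hx =>
    ((F_hasDerivAt hk (lt_of_lt_of_le ha0 hx.1)).continuousAt).continuousWithinAt
  have hIVT := intermediate_value_Icc hab.le hcont
  have hTmem : T ∈ Icc (F k a) (F k b) := ⟨hFa.le, hFb.le⟩
  obtain ⟨x, hxmem, hxeq⟩ := hIVT hTmem
  have hxa : x ∈ Ioi a := by
    rcases eq_or_lt_of_le hxmem.1 with h | h
    · exfalso; rw [← h] at hxeq; rw [hxeq] at hFa; exact lt_irrefl T hFa
    · exact h
  refine ⟨x, ⟨hxa, hxeq⟩, ?_⟩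
  rintro y ⟨hya, hyeq⟩
  have hx0 : x ∈ Ioi (0:ℝ) := lt_trans ha0 hxa
  have hy0 : y ∈ Ioi (0:ℝ) := lt_trans ha0 hya
  exact (F_strictMono hk).injOn hy0 hx0 (hyeq.trans hxeq.symm)

end
end
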